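/- arXiv:1406.0348 — 2 statements merged into one kernel-verified Lean document; each statement's English description precedes it below -/
import Mathlib

section
/- For a Minkowski norm F on ℝⁿ, the Riemannian manifold (ℝⁿ∖{0}, ĝ) is flat (curvature tensor R̂ ≡ 0) if and only if for some r₀ > 0 the level hypersurface S(r₀) = {F = r₀} with the induced metric has constant sectional curvature 1/r₀². -/
open Set

/-- Partial derivative of a scalar function on `ℝⁿ` in the `i`-th coordinate direction. -/
noncomputable def pd {n : ℕ} (i : Fin n) (f : (Fin n → ℝ) → ℝ) (y : Fin n → ℝ) : ℝ :=
  fderiv ℝ f y (Pi.single i 1)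

/-- Fundamental tensor `g_{ij}(y) = ½ ∂²(F²)/∂yⁱ∂yʲ` of a Minkowski norm `F`. -/
noncomputable def gF {n : ℕ} (F : (Fin n → ℝ) → ℝ) (y : Fin n → ℝ) (i j : Fin n) : ℝ :=
  pd i (pd j (fun z => F z ^ 2)) y / 2

/-- The metric evaluated on two vectors: `g_y(u,v) = g_{ij}(y) uⁱ vʲ`. -/
def gmet {n : ℕ} (G : (Fin n → ℝ) → Fin n → Fin n → ℝ) (y u v : Fin n → ℝ) : ℝ :=
  ∑ i, ∑ j, G y i j * u i * v j

/-- Inverse metric `gⁱʲ(y)` (matrix inverse). -/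
noncomputable def ginv {n : ℕ} (G : (Fin n → ℝ) → Fin n → Fin n → ℝ) (y : Fin n → ℝ) :
    Matrix (Fin n) (Fin n) ℝ :=
  (Matrix.of (G y))⁻¹

/-- Christoffel symbols of the second kind of the metric `G`:
`γⁱ_{jk} = (gⁱˢ/2)(∂g_{sj}/∂yᵏ + ∂g_{sk}/∂yʲ − ∂g_{jk}/∂yˢ)`. -/
noncomputable def christoffel {n : ℕ} (G : (Fin n → ℝ) → Fin n → Fin n → ℝ)
    (y : Fin n → ℝ) (i j k : Fin n) : ℝ :=
  (1 / 2) * ∑ s, ginv G y i s *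
    (pd k (fun z => G z s j) y + pd j (fun z => G z s k) y - pd s (fun z => G z j k) y)

/-- Cartan torsion `C_{ijk} = (F/4) ∂³F²/∂yⁱ∂yʲ∂yᵏ`. -/
noncomputable def cartan {n : ℕ} (F : (Fin n → ℝ) → ℝ) (y : Fin n → ℝ) (i j k : Fin n) : ℝ :=
  (F y / 4) * pd i (pd j (pd k (fun z => F z ^ 2))) y

/-- Mixed Cartan torsion `Cⁱ_{jk} = gⁱˢ C_{sjk}`. -/
noncomputable def cartanMixed {n : ℕ} (F : (Fin n → ℝ) → ℝ) (y : Fin n → ℝ) (i j k : Fin n) : ℝ :=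
  ∑ s, ginv (gF F) y i s * cartan F y s j k

/-- Covariant derivative (w.r.t. the Levi-Civita connection of `G`) of the vector field `V`
in the direction of the vector `X` at the point `y`:
`(∇_X V)ⁱ = X(Vⁱ) + γⁱ_{jk} Xʲ Vᵏ`. -/
noncomputable def covVec {n : ℕ} (G : (Fin n → ℝ) → Fin n → Fin n → ℝ)
    (V : (Fin n → ℝ) → Fin n → ℝ) (X y : Fin n → ℝ) : Fin n → ℝ :=
  fun i => fderiv ℝ (fun z => V z i) y X + ∑ j, ∑ k, christoffel G y i j k * X j * V y k

/-- Curvature tensor `Rⁱ_{jkl} = ∂γⁱ_{jl}/∂yᵏ − ∂γⁱ_{jk}/∂yˡ + γⁱ_{sk}γˢ_{jl} − γⁱ_{sl}γˢ_{jk}`. -/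
noncomputable def riem {n : ℕ} (G : (Fin n → ℝ) → Fin n → Fin n → ℝ)
    (y : Fin n → ℝ) (i j k l : Fin n) : ℝ :=
  pd k (fun z => christoffel G z i j l) y - pd l (fun z => christoffel G z i j k) y +
    ∑ s, (christoffel G y i s k * christoffel G y s j l -
      christoffel G y i s l * christoffel G y s j k)

/-- The curvature operator `R(X,Y)Z`, with components `Zʲ Xᵏ Yˡ Rⁱ_{jkl}`. -/
noncomputable def riemVec {n : ℕ} (G : (Fin n → ℝ) → Fin n → Fin n → ℝ)
    (y X Y Z : Fin n → ℝ) : Fin n → ℝ :=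
  fun i => ∑ j, ∑ k, ∑ l, riem G y i j k l * Z j * X k * Y l

/-- Ambient sectional curvature `K̂(U,V) = ĝ(R̂(V,U)V, U) / (ĝ(U,U)ĝ(V,V) − ĝ(U,V)²)`. -/
noncomputable def ambSec {n : ℕ} (G : (Fin n → ℝ) → Fin n → Fin n → ℝ)
    (y U V : Fin n → ℝ) : ℝ :=
  gmet G y (riemVec G y V U V) U /
    (gmet G y U U * gmet G y V V - (gmet G y U V) ^ 2)

/-- Sectional curvature of a hypersurface with unit normal `ν`, defined through the Gauss
equation: `K(U,V) = K̂(U,V) + (h(U,U)h(V,V) − h(U,V)²)/(g(U,U)g(V,V) − g(U,V)²)`, where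
`h(X,Y) = ĝ(∇̂_X ν, Y)` (the sign of `h` is immaterial as it appears quadratically). -/
noncomputable def hypSec {n : ℕ} (G : (Fin n → ℝ) → Fin n → Fin n → ℝ)
    (ν : (Fin n → ℝ) → Fin n → ℝ) (y U V : Fin n → ℝ) : ℝ :=
  ambSec G y U V +
    (gmet G y (covVec G ν U y) U * gmet G y (covVec G ν V y) V -
      (gmet G y (covVec G ν U y) V) ^ 2) /
    (gmet G y U U * gmet G y V V - (gmet G y U V) ^ 2)

/-- `F` is a Minkowski norm on `ℝⁿ`: smooth away from the origin, positive on nonzero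
vectors, positively homogeneous of degree one, and strongly convex (the fundamental
tensor is positive definite). -/
structure IsMinkowskiNorm (n : ℕ) (F : (Fin n → ℝ) → ℝ) : Prop where
  smooth : ContDiffOn ℝ (⊤ : ℕ∞) F {y | y ≠ 0}
  nonneg : ∀ y, 0 ≤ F y
  pos : ∀ y : Fin n → ℝ, y ≠ 0 → 0 < F y
  homog : ∀ lam : ℝ, 0 < lam → ∀ y, F (lam • y) = lam * F y
  posdef : ∀ y : Fin n → ℝ, y ≠ 0 → ∀ X : Fin n → ℝ, X ≠ 0 → 0 < gmet (gF F) y X X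

/-- `M` is a hypersurface of the Riemannian space with metric `G`, with unit normal field
`ν`: `ν` is smooth near `M` and of unit length along `M`, and every `g`-orthogonal
direction to `ν` at a point of `M` is realized as the velocity of a smooth curve in `M`. -/
structure IsHypersurface (n : ℕ) (G : (Fin n → ℝ) → Fin n → Fin n → ℝ)
    (M : Set (Fin n → ℝ)) (ν : (Fin n → ℝ) → Fin n → ℝ) : Prop where
  nonempty : M.Nonempty
  conn : IsPreconnected M
  smooth_nu : ∃ U, IsOpen U ∧ M ⊆ U ∧ ∀ i, ContDiffOn ℝ (⊤ : ℕ∞) (fun z => ν z i) U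
  unit : ∀ y ∈ M, gmet G y (ν y) (ν y) = 1
  curve : ∀ y ∈ M, ∀ X : Fin n → ℝ, gmet G y X (ν y) = 0 →
    ∃ c : ℝ → (Fin n → ℝ), ∃ ε > (0 : ℝ), ContDiff ℝ (⊤ : ℕ∞) c ∧ c 0 = y ∧ deriv c 0 = X ∧
      ∀ t : ℝ, |t| < ε → c t ∈ M

/-- The hypersurface `M` with unit normal `ν` is totally umbilical with mean curvature `H`:
`∇̂_X ν = −H X` for every tangent vector `X` at every point of `M`. -/
def TotallyUmbilical {n : ℕ} (G : (Fin n → ℝ) → Fin n → Fin n → ℝ)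
    (M : Set (Fin n → ℝ)) (ν : (Fin n → ℝ) → Fin n → ℝ) (H : (Fin n → ℝ) → ℝ) : Prop :=
  ∀ y ∈ M, ∀ X : Fin n → ℝ, gmet G y X (ν y) = 0 → covVec G ν X y = -(H y) • X

/-- Riemannian length of a path `c : [0,1] → ℝⁿ` with respect to the metric `G`. -/
noncomputable def pathLength {n : ℕ} (G : (Fin n → ℝ) → Fin n → Fin n → ℝ)
    (c : ℝ → Fin n → ℝ) : ℝ :=
  ∫ t in (0:ℝ)..1, Real.sqrt (gmet G (c t) (deriv c t) (deriv c t))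

/-- Intrinsic Riemannian distance in a subset `S` of `ℝⁿ` with respect to `G`: the infimum
of lengths of `C¹` paths inside `S` joining the two points. -/
noncomputable def pathDist {n : ℕ} (G : (Fin n → ℝ) → Fin n → Fin n → ℝ)
    (S : Set (Fin n → ℝ)) (a b : Fin n → ℝ) : ℝ :=
  sInf {L : ℝ | ∃ c : ℝ → Fin n → ℝ, ContDiff ℝ 1 c ∧ c 0 = a ∧ c 1 = b ∧
    (∀ t ∈ Set.Icc (0:ℝ) 1, c t ∈ S) ∧ L = pathLength G c}

/-- The standard Euclidean metric on `ℝⁿ`. -/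
def euclG (n : ℕ) : (Fin n → ℝ) → Fin n → Fin n → ℝ :=
  fun _ i j => if i = j then 1 else 0

/-- The round sphere of radius `r` centered at the origin of Euclidean `ℝⁿ`. -/
def euclSphere (n : ℕ) (r : ℝ) : Set (Fin n → ℝ) :=
  {z | ∑ i, z i ^ 2 = r ^ 2}


open Topology Filter

section Core
variable {n : ℕ}

lemma pd_congr_nhds {f g : (Fin n → ℝ) → ℝ} {y : Fin n → ℝ} (h : f =ᶠ[𝓝 y] g) (i : Fin n) :
    pd i f y = pd i g y := by
  unfold pd; rw [Filter.EventuallyEq.fderiv_eq h]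

lemma pd_add {f g : (Fin n → ℝ) → ℝ} {y : Fin n → ℝ} (hf : DifferentiableAt ℝ f y)
    (hg : DifferentiableAt ℝ g y) (i : Fin n) :
    pd i (fun z => f z + g z) y = pd i f y + pd i g y := by
  unfold pd; rw [fderiv_fun_add hf hg]; rfl

lemma pd_sub {f g : (Fin n → ℝ) → ℝ} {y : Fin n → ℝ} (hf : DifferentiableAt ℝ f y)
    (hg : DifferentiableAt ℝ g y) (i : Fin n) :
    pd i (fun z => f z - g z) y = pd i f y - pd i g y := by
  unfold pd; rw [fderiv_fun_sub hf hg]; rfl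

lemma pd_mul {f g : (Fin n → ℝ) → ℝ} {y : Fin n → ℝ} (hf : DifferentiableAt ℝ f y)
    (hg : DifferentiableAt ℝ g y) (i : Fin n) :
    pd i (fun z => f z * g z) y = pd i f y * g y + f y * pd i g y := by
  unfold pd; rw [fderiv_fun_mul hf hg]; simp [mul_comm]; ring

lemma pd_const (c : ℝ) (y : Fin n → ℝ) (i : Fin n) : pd i (fun _ => c) y = 0 := by
  unfold pd; simp

lemma pd_const_mul {f : (Fin n → ℝ) → ℝ} {y : Fin n → ℝ} (hf : DifferentiableAt ℝ f y)
    (c : ℝ) (i : Fin n) : pd i (fun z => c * f z) y = c * pd i f y := by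
  unfold pd; rw [fderiv_const_mul hf]; rfl

lemma pd_sum {ι : Type*} (s : Finset ι) {f : ι → (Fin n → ℝ) → ℝ} {y : Fin n → ℝ}
    (hf : ∀ a ∈ s, DifferentiableAt ℝ (f a) y) (i : Fin n) :
    pd i (fun z => ∑ a ∈ s, f a z) y = ∑ a ∈ s, pd i (f a) y := by
  unfold pd
  rw [fderiv_fun_sum hf]
  simp

lemma pd_coord (y : Fin n → ℝ) (i j : Fin n) :
    pd i (fun z => z j) y = if i = j then 1 else 0 := by
  unfold pd
  have : (fun z : Fin n → ℝ => z j) = (ContinuousLinearMap.proj j : (Fin n → ℝ) →L[ℝ] ℝ) := rfl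
  rw [this, ContinuousLinearMap.fderiv]
  simp [ContinuousLinearMap.proj, Pi.single_apply, eq_comm]

lemma differentiableAt_coord (y : Fin n → ℝ) (j : Fin n) :
    DifferentiableAt ℝ (fun z : Fin n → ℝ => z j) y :=
  (ContinuousLinearMap.proj j : (Fin n → ℝ) →L[ℝ] ℝ).differentiableAt

/-- directional derivative as a sum of pd's -/
lemma fderiv_eq_sum_pd {f : (Fin n → ℝ) → ℝ} {y : Fin n → ℝ} (hf : DifferentiableAt ℝ f y)
    (X : Fin n → ℝ) : fderiv ℝ f y X = ∑ i, X i * pd i f y := by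
  unfold pd
  have hX : X = ∑ i, X i • (Pi.single i 1 : Fin n → ℝ) := by
    funext j
    rw [Finset.sum_apply]
    rw [Finset.sum_eq_single j] <;> simp +contextual [Pi.single_apply, eq_comm]
  conv_lhs => rw [hX]
  rw [map_sum]
  simp [mul_comm]

variable {n : ℕ}

def Omg (n : ℕ) : Set (Fin n → ℝ) := {y | y ≠ 0}

lemma isOpen_Omg : IsOpen (Omg n) := isOpen_ne

/-- differentiability from ContDiffOn on the open set -/
lemma diffAt_of_cd {u : (Fin n → ℝ) → ℝ} (hu : ContDiffOn ℝ (⊤ : ℕ∞) u (Omg n)) {y : Fin n → ℝ}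
    (hy : y ≠ 0) : DifferentiableAt ℝ u y :=
  ((hu.differentiableOn (by simp)).differentiableAt (isOpen_Omg.mem_nhds hy))

lemma contDiffOn_pd {u : (Fin n → ℝ) → ℝ} (hu : ContDiffOn ℝ (⊤ : ℕ∞) u (Omg n)) (i : Fin n) :
    ContDiffOn ℝ (⊤ : ℕ∞) (pd i u) (Omg n) := by
  have h := hu.fderiv_of_isOpen isOpen_Omg (by exact_mod_cast (le_top : (⊤:ℕ∞) + 1 ≤ ⊤) : ((⊤ : ℕ∞) : WithTop ℕ∞) + 1 ≤ ((⊤ : ℕ∞) : WithTop ℕ∞))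
  exact h.clm_apply contDiffOn_const

/-- Schwarz symmetry of second partials for functions smooth on Ω. -/
lemma pd_symm {u : (Fin n → ℝ) → ℝ} (hu : ContDiffOn ℝ (⊤ : ℕ∞) u (Omg n)) {y : Fin n → ℝ}
    (hy : y ≠ 0) (i j : Fin n) : pd i (pd j u) y = pd j (pd i u) y := by
  have hev : ∀ᶠ z in 𝓝 y, HasFDerivAt u (fderiv ℝ u z) z := by
    filter_upwards [isOpen_Omg.mem_nhds hy] with z hz
    exact (diffAt_of_cd hu hz).hasFDerivAt
  have hd' : DifferentiableAt ℝ (fderiv ℝ u) y := by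
    have h := hu.fderiv_of_isOpen isOpen_Omg (by exact_mod_cast (le_top : (⊤:ℕ∞) + 1 ≤ ⊤) : ((⊤ : ℕ∞) : WithTop ℕ∞) + 1 ≤ ((⊤ : ℕ∞) : WithTop ℕ∞))
    exact (h.differentiableOn (by simp)).differentiableAt (isOpen_Omg.mem_nhds hy)
  have hsym := second_derivative_symmetric_of_eventually hev hd'.hasFDerivAt
    (Pi.single i 1) (Pi.single j 1)
  have key : ∀ a b : Fin n,
      pd a (pd b u) y = fderiv ℝ (fderiv ℝ u) y (Pi.single a 1) (Pi.single b 1) := by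
    intro a b
    have : (pd b u) = fun z => (fderiv ℝ u z) (Pi.single b 1) := rfl
    rw [show pd a (pd b u) y = fderiv ℝ (fun z => (fderiv ℝ u z) (Pi.single b 1)) y
        (Pi.single a 1) from rfl]
    have hc := hd'.hasFDerivAt.clm_apply
      (hasFDerivAt_const (Pi.single b 1 : Fin n → ℝ) y)
    rw [hc.fderiv]
    simp
  rw [key, key, hsym]

/-- derivative of a scaled function -/
lemma pd_scale {u : (Fin n → ℝ) → ℝ} {t : ℝ} {y : Fin n → ℝ}
    (hu : DifferentiableAt ℝ u (t • y)) (i : Fin n) :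
    pd i (fun z => u (t • z)) y = t * pd i u (t • y) := by
  set L : (Fin n → ℝ) →L[ℝ] (Fin n → ℝ) := t • (ContinuousLinearMap.id ℝ (Fin n → ℝ)) with hLdef
  have hLy : L y = t • y := rfl
  have hsm : HasFDerivAt (⇑L) L y := L.hasFDerivAt
  have hcomp : HasFDerivAt (fun z => u (t • z)) ((fderiv ℝ u (t • y)).comp L) y := by
    have h1 : HasFDerivAt u (fderiv ℝ u (t • y)) (L y) := by rw [hLy]; exact hu.hasFDerivAt
    have h2 := h1.comp y hsm
    have : (u ∘ ⇑L) = fun z => u (t • z) := by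
      funext z; simp [L]
    rwa [this] at h2
  rw [show pd i (fun z => u (t • z)) y
      = fderiv ℝ (fun z => u (t • z)) y (Pi.single i 1) from rfl, hcomp.fderiv]
  simp [pd, L, smul_eq_mul]

/-- homogeneity descends to derivatives: if `u (t • z) = c * u z` near `y`, then
`t * pd i u (t • y) = c * pd i u y`. -/
lemma pd_of_homog {u : (Fin n → ℝ) → ℝ} {t c : ℝ} {y : Fin n → ℝ}
    (hut : DifferentiableAt ℝ u (t • y)) (huy : DifferentiableAt ℝ u y)
    (h : ∀ᶠ z in 𝓝 y, u (t • z) = c * u z) (i : Fin n) :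
    t * pd i u (t • y) = c * pd i u y := by
  have h1 : pd i (fun z => u (t • z)) y = pd i (fun z => c * u z) y := by
    unfold pd; rw [Filter.EventuallyEq.fderiv_eq h]
  rw [← pd_scale hut i, h1]
  unfold pd; rw [fderiv_const_mul huy]; rfl

/-- Euler's identity: if `u (t • y) = t ^ k * u y` for `t` near 1, then
`∑ i, y i * pd i u y = k * u y`. -/
lemma euler {u : (Fin n → ℝ) → ℝ} {y : Fin n → ℝ} (hu : DifferentiableAt ℝ u y) (k : ℤ)
    (h : ∀ᶠ t in 𝓝 (1:ℝ), u (t • y) = t ^ k * u y) :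
    ∑ i, y i * pd i u y = k * u y := by
  have hc : HasDerivAt (fun t : ℝ => u (t • y)) (fderiv ℝ u y y) 1 := by
    have hcurve : HasDerivAt (fun t : ℝ => t • y) y 1 := by
      simpa using (hasDerivAt_id (1:ℝ)).smul_const y
    have hu1 : HasFDerivAt u (fderiv ℝ u y) ((1:ℝ) • y) := by
      rw [one_smul]; exact hu.hasFDerivAt
    have := hu1.comp_hasDerivAt 1 hcurve
    exact this
  have hz : HasDerivAt (fun t : ℝ => t ^ k * u y) ((k : ℝ) * u y) 1 := by
    have : HasDerivAt (fun t : ℝ => t ^ k) ((k : ℝ) * (1:ℝ) ^ (k - 1)) 1 := by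
      simpa using hasDerivAt_zpow k (1:ℝ) (Or.inl one_ne_zero)
    simpa using this.mul_const (u y)
  have : fderiv ℝ u y y = (k : ℝ) * u y := by
    have := (hc.congr_of_eventuallyEq (by filter_upwards [h] with t ht using ht.symm))
    -- `this : HasDerivAt (fun t => t ^ k * u y) (fderiv ℝ u y y) 1`? direction check
    exact this.unique hz
  rw [← this]
  exact (fderiv_eq_sum_pd hu y).symm

end Core
section Metric
open Topology Filter
variable {n : ℕ} {F : (Fin n → ℝ) → ℝ}

lemma fsq_smooth (hF : IsMinkowskiNorm n F) :
    ContDiffOn ℝ (⊤ : ℕ∞) (fun z => F z ^ 2) (Omg n) := hF.smooth.pow 2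

lemma fsq_homog (hF : IsMinkowskiNorm n F) {t : ℝ} (ht : 0 < t) (z : Fin n → ℝ) :
    F (t • z) ^ 2 = t ^ 2 * F z ^ 2 := by
  rw [hF.homog t ht]; ring

lemma pdf_smooth (hF : IsMinkowskiNorm n F) (j : Fin n) :
    ContDiffOn ℝ (⊤ : ℕ∞) (pd j (fun z => F z ^ 2)) (Omg n) := contDiffOn_pd (fsq_smooth hF) j

lemma pdf_diff (hF : IsMinkowskiNorm n F) (j : Fin n) {y : Fin n → ℝ} (hy : y ≠ 0) :
    DifferentiableAt ℝ (pd j (fun z => F z ^ 2)) y := diffAt_of_cd (pdf_smooth hF j) hy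

lemma fsq_diff (hF : IsMinkowskiNorm n F) {y : Fin n → ℝ} (hy : y ≠ 0) :
    DifferentiableAt ℝ (fun z => F z ^ 2) y := diffAt_of_cd (fsq_smooth hF) hy

lemma smul_ne_zero_of {t : ℝ} (ht : 0 < t) {y : Fin n → ℝ} (hy : y ≠ 0) : t • y ≠ 0 :=
  smul_ne_zero (ne_of_gt ht) hy

/-- `∂ⱼ(F²)` is positively homogeneous of degree 1. -/
lemma pdf_homog (hF : IsMinkowskiNorm n F) {t : ℝ} (ht : 0 < t) {y : Fin n → ℝ} (hy : y ≠ 0)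
    (j : Fin n) : pd j (fun z => F z ^ 2) (t • y) = t * pd j (fun z => F z ^ 2) y := by
  have h := pd_of_homog (u := fun z => F z ^ 2) (t := t) (c := t ^ 2)
    (fsq_diff hF (smul_ne_zero_of ht hy)) (fsq_diff hF hy)
    (Eventually.of_forall fun z => fsq_homog hF ht z) j
  have ht' : t ≠ 0 := ne_of_gt ht
  field_simp at h ⊢
  nlinarith [h]

lemma g_smooth (hF : IsMinkowskiNorm n F) (i j : Fin n) :
    ContDiffOn ℝ (⊤ : ℕ∞) (fun z => gF F z i j) (Omg n) := by
  have := (contDiffOn_pd (pdf_smooth hF j) i).div_const 2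
  exact this

lemma g_diff (hF : IsMinkowskiNorm n F) (i j : Fin n) {y : Fin n → ℝ} (hy : y ≠ 0) :
    DifferentiableAt ℝ (fun z => gF F z i j) y := diffAt_of_cd (g_smooth hF i j) hy

lemma g_symm (hF : IsMinkowskiNorm n F) {y : Fin n → ℝ} (hy : y ≠ 0) (i j : Fin n) :
    gF F y i j = gF F y j i := by
  unfold gF; rw [pd_symm (fsq_smooth hF) hy]

lemma g_homog (hF : IsMinkowskiNorm n F) {t : ℝ} (ht : 0 < t) {y : Fin n → ℝ} (hy : y ≠ 0)
    (i j : Fin n) : gF F (t • y) i j = gF F y i j := by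
  have h := pd_of_homog (u := pd j (fun z => F z ^ 2)) (t := t) (c := t)
    (pdf_diff hF j (smul_ne_zero_of ht hy)) (pdf_diff hF j hy) ?ev i
  · have ht' : t ≠ 0 := ne_of_gt ht
    unfold gF
    have h2 : pd i (pd j fun z => F z ^ 2) (t • y) = pd i (pd j fun z => F z ^ 2) y :=
      mul_left_cancel₀ ht' h
    rw [h2]
  case ev =>
    filter_upwards [isOpen_Omg.mem_nhds hy] with z hz
    exact pdf_homog hF ht hz j

/-- `∂g` is positively homogeneous of degree -1 : `t * ∂g(t•y) = ∂g(y)`. -/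
lemma pdg_homog (hF : IsMinkowskiNorm n F) {t : ℝ} (ht : 0 < t) {y : Fin n → ℝ} (hy : y ≠ 0)
    (i j k : Fin n) :
    t * pd k (fun z => gF F z i j) (t • y) = pd k (fun z => gF F z i j) y := by
  have h := pd_of_homog (u := fun z => gF F z i j) (t := t) (c := 1)
    (g_diff hF i j (smul_ne_zero_of ht hy)) (g_diff hF i j hy) ?_ k
  · rw [h, one_mul]
  · filter_upwards [isOpen_Omg.mem_nhds hy] with z hz
    rw [one_mul]
    exact g_homog hF ht hz i j

/-- Euler: `∑ₖ yᵏ ∂ₖ g_{ij}(y) = 0`. -/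
lemma eul_g (hF : IsMinkowskiNorm n F) {y : Fin n → ℝ} (hy : y ≠ 0) (i j : Fin n) :
    ∑ k, y k * pd k (fun z => gF F z i j) y = 0 := by
  have h := euler (u := fun z => gF F z i j) (g_diff hF i j hy) 0 ?_
  · simpa using h
  · filter_upwards [eventually_gt_nhds (zero_lt_one (α := ℝ))] with t ht
    rw [g_homog hF ht hy i j]; simp

/-- Euler: `∑ₖ yᵏ ∂ₖ ∂ᵢ(F²)(y) = ∂ᵢ(F²)(y)`. -/
lemma eul_pdf (hF : IsMinkowskiNorm n F) {y : Fin n → ℝ} (hy : y ≠ 0) (i : Fin n) :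
    ∑ k, y k * pd k (pd i (fun z => F z ^ 2)) y = pd i (fun z => F z ^ 2) y := by
  have h := euler (u := pd i (fun z => F z ^ 2)) (pdf_diff hF i hy) 1 ?_
  · simpa using h
  · filter_upwards [eventually_gt_nhds (zero_lt_one (α := ℝ))] with t ht
    rw [pdf_homog hF ht hy i]; simp

/-- `∑ⱼ g_{ij}(y) yʲ = ½ ∂ᵢ(F²)(y)`. -/
lemma g_contract (hF : IsMinkowskiNorm n F) {y : Fin n → ℝ} (hy : y ≠ 0) (i : Fin n) :
    ∑ j, gF F y i j * y j = pd i (fun z => F z ^ 2) y / 2 := by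
  have : ∀ j, gF F y i j * y j = y j * pd j (pd i (fun z => F z ^ 2)) y / 2 := by
    intro j
    unfold gF
    rw [pd_symm (fsq_smooth hF) hy]
    ring
  rw [Finset.sum_congr rfl fun j _ => this j, ← Finset.sum_div, eul_pdf hF hy i]

/-- Euler in a derivative slot: `∑ₖ ∂ⱼ g_{ik}(y) yᵏ = 0`. -/
lemma eul_g' (hF : IsMinkowskiNorm n F) {y : Fin n → ℝ} (hy : y ≠ 0) (i j : Fin n) :
    ∑ k, pd j (fun z => gF F z i k) y * y k = 0 := by
  -- differentiate the identity `∑ₖ g_{ik}(z) zᵏ = ½ ∂ᵢ(F²)(z)` in direction j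
  have hid : (fun z => ∑ k, gF F z i k * z k) =ᶠ[𝓝 y]
      (fun z => pd i (fun w => F w ^ 2) z / 2) := by
    filter_upwards [isOpen_Omg.mem_nhds hy] with z hz
    exact g_contract hF hz i
  have hL : pd j (fun z => ∑ k, gF F z i k * z k) y
      = ∑ k, (pd j (fun z => gF F z i k) y * y k + gF F y i k * (if j = k then 1 else 0)) := by
    rw [pd_sum Finset.univ (f := fun k z => gF F z i k * z k) (fun k _ => ((g_diff hF i k hy).mul (differentiableAt_coord y k))) j]
    refine Finset.sum_congr rfl fun k _ => ?_
    rw [pd_mul (g_diff hF i k hy) (differentiableAt_coord y k) j, pd_coord]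
  have hR : pd j (fun z => pd i (fun w => F w ^ 2) z / 2) y = gF F y i j := by
    have : (fun z => pd i (fun w => F w ^ 2) z / 2)
        = fun z => (1/2) * pd i (fun w => F w ^ 2) z := by funext z; ring
    rw [this, pd_const_mul (pdf_diff hF i hy), pd_symm (fsq_smooth hF) hy]
    unfold gF; ring
  have := pd_congr_nhds hid j
  rw [hL, hR] at this
  have hsplit : ∑ k, (pd j (fun z => gF F z i k) y * y k
      + gF F y i k * (if j = k then 1 else 0))
      = (∑ k, pd j (fun z => gF F z i k) y * y k) + gF F y i j := by
    rw [Finset.sum_add_distrib]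
    congr 1
    rw [Finset.sum_eq_single j] <;> simp +contextual [eq_comm]
  rw [hsplit] at this
  linarith

end Metric
section MatrixFacts
open Topology Filter
variable {n : ℕ} {F : (Fin n → ℝ) → ℝ}

lemma g_posdef (hF : IsMinkowskiNorm n F) {y : Fin n → ℝ} (hy : y ≠ 0) :
    (Matrix.of (gF F y)).PosDef := by
  refine Matrix.PosDef.of_dotProduct_mulVec_pos ?_ ?_
  · ext i j
    simp only [Matrix.conjTranspose_apply, Matrix.of_apply, star_trivial]
    exact g_symm hF hy j i
  · intro x hx
    have h := hF.posdef y hy x hx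
    have heq : dotProduct (star x) ((Matrix.of (gF F y)).mulVec x)
        = gmet (gF F) y x x := by
      unfold gmet
      simp only [star_trivial, dotProduct, Matrix.mulVec, Matrix.of_apply,
        Finset.mul_sum]
      refine Finset.sum_congr rfl fun i _ => ?_
      refine Finset.sum_congr rfl fun j _ => ?_
      ring
    rw [heq]
    exact h

lemma g_det_unit (hF : IsMinkowskiNorm n F) {y : Fin n → ℝ} (hy : y ≠ 0) :
    IsUnit (Matrix.of (gF F y)).det :=
  (Matrix.isUnit_iff_isUnit_det _).mp (g_posdef hF hy).isUnit

lemma g_det_ne (hF : IsMinkowskiNorm n F) {y : Fin n → ℝ} (hy : y ≠ 0) :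
    (Matrix.of (gF F y)).det ≠ 0 := ne_of_gt (g_posdef hF hy).det_pos

/-- `gⁱˢ g_{sj} = δⁱⱼ` -/
lemma ginv_g (hF : IsMinkowskiNorm n F) {y : Fin n → ℝ} (hy : y ≠ 0) (i j : Fin n) :
    ∑ s, ginv (gF F) y i s * gF F y s j = if i = j then 1 else 0 := by
  have h := Matrix.nonsing_inv_mul (Matrix.of (gF F y)) (g_det_unit hF hy)
  have := congrFun (congrFun h i) j
  rw [Matrix.mul_apply] at this
  rw [show (1 : Matrix (Fin n) (Fin n) ℝ) i j = if i = j then 1 else 0 from Matrix.one_apply] at this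
  exact this

/-- `g_{is} gˢʲ = δᵢⱼ` -/
lemma g_ginv (hF : IsMinkowskiNorm n F) {y : Fin n → ℝ} (hy : y ≠ 0) (i j : Fin n) :
    ∑ s, gF F y i s * ginv (gF F) y s j = if i = j then 1 else 0 := by
  have h := Matrix.mul_nonsing_inv (Matrix.of (gF F y)) (g_det_unit hF hy)
  have := congrFun (congrFun h i) j
  rw [Matrix.mul_apply] at this
  rw [show (1 : Matrix (Fin n) (Fin n) ℝ) i j = if i = j then 1 else 0 from Matrix.one_apply] at this
  exact this

lemma ginv_symm (hF : IsMinkowskiNorm n F) {y : Fin n → ℝ} (hy : y ≠ 0) (i j : Fin n) :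
    ginv (gF F) y i j = ginv (gF F) y j i := by
  have hsym : (Matrix.of (gF F y)).transpose = Matrix.of (gF F y) := by
    ext a b; simp only [Matrix.transpose_apply, Matrix.of_apply]; exact g_symm hF hy b a
  have := Matrix.transpose_nonsing_inv (Matrix.of (gF F y))
  rw [hsym] at this
  have h2 := congrFun (congrFun this i) j
  rw [Matrix.transpose_apply] at h2
  exact h2.symm

lemma ginv_homog (hF : IsMinkowskiNorm n F) {t : ℝ} (ht : 0 < t) {y : Fin n → ℝ}
    (hy : y ≠ 0) (i j : Fin n) : ginv (gF F) (t • y) i j = ginv (gF F) y i j := by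
  have : Matrix.of (gF F (t • y)) = Matrix.of (gF F y) := by
    ext a b; exact g_homog hF ht hy a b
  unfold ginv; rw [this]

/-- determinant of a matrix of smooth functions is smooth -/
lemma det_cd {ι : Type*} [Fintype ι] [DecidableEq ι] {M : (Fin n → ℝ) → Matrix ι ι ℝ}
    (h : ∀ i j, ContDiffOn ℝ (⊤ : ℕ∞) (fun z => M z i j) (Omg n)) :
    ContDiffOn ℝ (⊤ : ℕ∞) (fun z => (M z).det) (Omg n) := by
  have : (fun z => (M z).det)
      = fun z => ∑ σ : Equiv.Perm ι, ((Equiv.Perm.sign σ : ℤ) : ℝ) * ∏ i, M z (σ i) i := by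
    funext z; rw [Matrix.det_apply']
  rw [this]
  refine ContDiffOn.sum fun σ _ => ?_
  exact contDiffOn_const.mul (contDiffOn_prod fun i _ => h (σ i) i)

lemma adj_cd {M : (Fin n → ℝ) → Matrix (Fin n) (Fin n) ℝ}
    (h : ∀ i j, ContDiffOn ℝ (⊤ : ℕ∞) (fun z => M z i j) (Omg n)) (i j : Fin n) :
    ContDiffOn ℝ (⊤ : ℕ∞) (fun z => (M z).adjugate i j) (Omg n) := by
  have : (fun z => (M z).adjugate i j)
      = fun z => ((M z).updateRow j (Pi.single i 1)).det := by
    funext z; rw [Matrix.adjugate_apply]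
  rw [this]
  refine det_cd fun a b => ?_
  by_cases hab : a = j
  · subst hab
    simp only [Matrix.updateRow_apply, if_pos rfl]
    exact contDiffOn_const
  · simp only [Matrix.updateRow_apply, if_neg hab]
    exact h a b

lemma ginv_smooth (hF : IsMinkowskiNorm n F) (i j : Fin n) :
    ContDiffOn ℝ (⊤ : ℕ∞) (fun z => ginv (gF F) z i j) (Omg n) := by
  have hfun : ∀ z : Fin n → ℝ, ginv (gF F) z i j
      = ((Matrix.of (gF F z)).det)⁻¹ * (Matrix.of (gF F z)).adjugate i j := by
    intro z
    unfold ginv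
    rw [Matrix.inv_def, Ring.inverse_eq_inv]
    simp [Matrix.smul_apply, smul_eq_mul]
  have : (fun z => ginv (gF F) z i j)
      = fun z => ((Matrix.of (gF F z)).det)⁻¹ * (Matrix.of (gF F z)).adjugate i j := by
    funext z; exact hfun z
  rw [this]
  have hdet : ContDiffOn ℝ (⊤ : ℕ∞) (fun z => (Matrix.of (gF F z)).det) (Omg n) :=
    det_cd fun a b => g_smooth hF a b
  exact (hdet.inv fun z hz => g_det_ne hF hz).mul (adj_cd (fun a b => g_smooth hF a b) i j)

end MatrixFacts
section Christoffel
open Topology Filter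
variable {n : ℕ} {F : (Fin n → ℝ) → ℝ}

lemma chr_symm (hF : IsMinkowskiNorm n F) {y : Fin n → ℝ} (hy : y ≠ 0) (i j k : Fin n) :
    christoffel (gF F) y i j k = christoffel (gF F) y i k j := by
  unfold christoffel
  congr 1
  refine Finset.sum_congr rfl fun s _ => ?_
  have hjk : pd s (fun z => gF F z j k) y = pd s (fun z => gF F z k j) y := by
    refine pd_congr_nhds ?_ s
    filter_upwards [isOpen_Omg.mem_nhds hy] with z hz
    exact g_symm hF hz j k
  rw [hjk]
  ring

lemma chr_smooth (hF : IsMinkowskiNorm n F) (i j k : Fin n) :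
    ContDiffOn ℝ (⊤ : ℕ∞) (fun z => christoffel (gF F) z i j k) (Omg n) := by
  unfold christoffel
  refine contDiffOn_const.mul ?_
  refine ContDiffOn.sum fun s _ => ?_
  refine (ginv_smooth hF i s).mul ?_
  exact ((contDiffOn_pd (g_smooth hF s j) k).add (contDiffOn_pd (g_smooth hF s k) j)).sub
    (contDiffOn_pd (g_smooth hF j k) s)

lemma chr_diff (hF : IsMinkowskiNorm n F) (i j k : Fin n) {y : Fin n → ℝ} (hy : y ≠ 0) :
    DifferentiableAt ℝ (fun z => christoffel (gF F) z i j k) y :=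
  diffAt_of_cd (chr_smooth hF i j k) hy

/-- `∑ₖ Γⁱⱼₖ(y) yᵏ = 0`. -/
lemma chr_contract (hF : IsMinkowskiNorm n F) {y : Fin n → ℝ} (hy : y ≠ 0) (i j : Fin n) :
    ∑ k, christoffel (gF F) y i j k * y k = 0 := by
  unfold christoffel
  have step : ∀ k, (1 / 2 * ∑ s, ginv (gF F) y i s *
      (pd k (fun z => gF F z s j) y + pd j (fun z => gF F z s k) y
        - pd s (fun z => gF F z j k) y)) * y k
      = ∑ s, 1 / 2 * ginv (gF F) y i s *
      ((pd k (fun z => gF F z s j) y) * y k + (pd j (fun z => gF F z s k) y) * y k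
        - (pd s (fun z => gF F z j k) y) * y k) := by
    intro k
    rw [Finset.mul_sum, Finset.sum_mul]
    refine Finset.sum_congr rfl fun s _ => ?_
    ring
  rw [Finset.sum_congr rfl fun k _ => step k, Finset.sum_comm]
  refine Finset.sum_eq_zero fun s _ => ?_
  have h1 : ∑ k, (pd k (fun z => gF F z s j) y) * y k = 0 := by
    rw [← eul_g hF hy s j]
    exact Finset.sum_congr rfl fun k _ => mul_comm _ _
  have h2 : ∑ k, (pd j (fun z => gF F z s k) y) * y k = 0 := eul_g' hF hy s j
  have h3 : ∑ k, (pd s (fun z => gF F z j k) y) * y k = 0 := eul_g' hF hy j s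
  calc ∑ k, 1 / 2 * ginv (gF F) y i s *
      ((pd k (fun z => gF F z s j) y) * y k + (pd j (fun z => gF F z s k) y) * y k
        - (pd s (fun z => gF F z j k) y) * y k)
      = 1 / 2 * ginv (gF F) y i s *
        ((∑ k, (pd k (fun z => gF F z s j) y) * y k)
          + (∑ k, (pd j (fun z => gF F z s k) y) * y k)
          - (∑ k, (pd s (fun z => gF F z j k) y) * y k)) := by
        rw [← Finset.mul_sum]
        congr 1
        rw [Finset.sum_sub_distrib, Finset.sum_add_distrib]
    _ = 0 := by rw [h1, h2, h3]; ring

lemma chr_homog (hF : IsMinkowskiNorm n F) {t : ℝ} (ht : 0 < t) {y : Fin n → ℝ}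
    (hy : y ≠ 0) (i j k : Fin n) :
    christoffel (gF F) (t • y) i j k = t⁻¹ * christoffel (gF F) y i j k := by
  have ht' : t ≠ 0 := ne_of_gt ht
  unfold christoffel
  rw [Finset.mul_sum, Finset.mul_sum, Finset.mul_sum]
  refine Finset.sum_congr rfl fun s _ => ?_
  rw [ginv_homog hF ht hy i s]
  have e1 : pd k (fun z => gF F z s j) (t • y) = t⁻¹ * pd k (fun z => gF F z s j) y := by
    rw [← pdg_homog hF ht hy s j k]; field_simp
  have e2 : pd j (fun z => gF F z s k) (t • y) = t⁻¹ * pd j (fun z => gF F z s k) y := by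
    rw [← pdg_homog hF ht hy s k j]; field_simp
  have e3 : pd s (fun z => gF F z j k) (t • y) = t⁻¹ * pd s (fun z => gF F z j k) y := by
    rw [← pdg_homog hF ht hy j k s]; field_simp
  rw [e1, e2, e3]
  ring

/-- Euler for Γ (degree −1): `∑ₗ yˡ ∂ₗ Γⁱⱼₖ(y) = −Γⁱⱼₖ(y)`. -/
lemma chr_euler (hF : IsMinkowskiNorm n F) {y : Fin n → ℝ} (hy : y ≠ 0) (i j k : Fin n) :
    ∑ l, y l * pd l (fun z => christoffel (gF F) z i j k) y
      = -christoffel (gF F) y i j k := by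
  have h := euler (u := fun z => christoffel (gF F) z i j k) (chr_diff hF i j k hy) (-1) ?_
  · rw [h]; push_cast; ring
  · filter_upwards [eventually_gt_nhds (zero_lt_one (α := ℝ))] with t ht
    rw [chr_homog hF ht hy i j k]
    rw [zpow_neg_one]

/-- differentiating `∑ₖ Γⁱⱼₖ(z) zᵏ = 0` :
`∑ₗ ∂ₖΓⁱⱼₗ(y) yˡ = −Γⁱⱼₖ(y)`. -/
lemma pd_chr_contract (hF : IsMinkowskiNorm n F) {y : Fin n → ℝ} (hy : y ≠ 0) (i j k : Fin n) :
    ∑ l, pd k (fun z => christoffel (gF F) z i j l) y * y l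
      = -christoffel (gF F) y i j k := by
  have hid : (fun z => ∑ l, christoffel (gF F) z i j l * z l) =ᶠ[𝓝 y] (fun _ => (0:ℝ)) := by
    filter_upwards [isOpen_Omg.mem_nhds hy] with z hz
    exact chr_contract hF hz i j
  have h0 : pd k (fun z => ∑ l, christoffel (gF F) z i j l * z l) y = 0 := by
    rw [pd_congr_nhds hid k, pd_const]
  have hL : pd k (fun z => ∑ l, christoffel (gF F) z i j l * z l) y
      = (∑ l, pd k (fun z => christoffel (gF F) z i j l) y * y l)
        + christoffel (gF F) y i j k := by
    rw [pd_sum Finset.univ (f := fun l z => christoffel (gF F) z i j l * z l) (fun l _ => (chr_diff hF i j l hy).mul (differentiableAt_coord y l)) k]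
    have : ∀ l, pd k (fun z => christoffel (gF F) z i j l * z l) y
        = pd k (fun z => christoffel (gF F) z i j l) y * y l
          + christoffel (gF F) y i j l * (if k = l then 1 else 0) := by
      intro l
      rw [pd_mul (chr_diff hF i j l hy) (differentiableAt_coord y l) k, pd_coord]
    rw [Finset.sum_congr rfl fun l _ => this l, Finset.sum_add_distrib]
    congr 1
    rw [Finset.sum_eq_single k] <;> simp +contextual [eq_comm]
  rw [hL] at h0
  linarith

end Christoffel
section Curvature
open Topology Filter
variable {n : ℕ} {F : (Fin n → ℝ) → ℝ}

lemma riem_antisym (G : (Fin n → ℝ) → Fin n → Fin n → ℝ) (y : Fin n → ℝ) (i j k l : Fin n) :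
    riem G y i j k l = - riem G y i j l k := by
  unfold riem
  have h : ∀ s : Fin n, (christoffel G y i s k * christoffel G y s j l
      - christoffel G y i s l * christoffel G y s j k)
      = -(christoffel G y i s l * christoffel G y s j k
        - christoffel G y i s k * christoffel G y s j l) := fun s => by ring
  rw [Finset.sum_congr rfl fun s _ => h s, Finset.sum_neg_distrib]
  ring

lemma pd_chr_symm (hF : IsMinkowskiNorm n F) {y : Fin n → ℝ} (hy : y ≠ 0) (i a b c : Fin n) :
    pd c (fun z => christoffel (gF F) z i a b) y
      = pd c (fun z => christoffel (gF F) z i b a) y := by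
  refine pd_congr_nhds ?_ c
  filter_upwards [isOpen_Omg.mem_nhds hy] with z hz
  exact chr_symm hF hz i a b

lemma riem_bianchi (hF : IsMinkowskiNorm n F) {y : Fin n → ℝ} (hy : y ≠ 0) (i j k l : Fin n) :
    riem (gF F) y i j k l + riem (gF F) y i k l j + riem (gF F) y i l j k = 0 := by
  unfold riem
  rw [pd_chr_symm hF hy i l j k, pd_chr_symm hF hy i k j l, pd_chr_symm hF hy i l k j]
  have hsum : ∑ s, (christoffel (gF F) y i s k * christoffel (gF F) y s j l
        - christoffel (gF F) y i s l * christoffel (gF F) y s j k)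
      + ∑ s, (christoffel (gF F) y i s l * christoffel (gF F) y s k j
        - christoffel (gF F) y i s j * christoffel (gF F) y s k l)
      + ∑ s, (christoffel (gF F) y i s j * christoffel (gF F) y s l k
        - christoffel (gF F) y i s k * christoffel (gF F) y s l j) = 0 := by
    rw [← Finset.sum_add_distrib, ← Finset.sum_add_distrib]
    refine Finset.sum_eq_zero fun s _ => ?_
    rw [chr_symm hF hy s k j, chr_symm hF hy s l k, chr_symm hF hy s l j]
    ring
  linarith [hsum]

/-- `Rⁱⱼₖₗ yʲ = 0`. -/
lemma riem_radial_j (hF : IsMinkowskiNorm n F) {y : Fin n → ℝ} (hy : y ≠ 0) (i k l : Fin n) :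
    ∑ j, riem (gF F) y i j k l * y j = 0 := by
  unfold riem
  have expand : ∀ j : Fin n, (pd k (fun z => christoffel (gF F) z i j l) y
      - pd l (fun z => christoffel (gF F) z i j k) y
      + ∑ s, (christoffel (gF F) y i s k * christoffel (gF F) y s j l
        - christoffel (gF F) y i s l * christoffel (gF F) y s j k)) * y j
      = pd k (fun z => christoffel (gF F) z i l j) y * y j
        - pd l (fun z => christoffel (gF F) z i k j) y * y j
        + ∑ s, (christoffel (gF F) y i s k * (christoffel (gF F) y s l j * y j)
          - christoffel (gF F) y i s l * (christoffel (gF F) y s k j * y j)) := by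
    intro j
    rw [pd_chr_symm hF hy i j l k, pd_chr_symm hF hy i j k l, add_mul, sub_mul, Finset.sum_mul]
    congr 1
    refine Finset.sum_congr rfl fun s _ => ?_
    rw [chr_symm hF hy s l j, chr_symm hF hy s k j]
    ring
  rw [Finset.sum_congr rfl fun j _ => expand j]
  rw [Finset.sum_add_distrib, Finset.sum_sub_distrib]
  rw [pd_chr_contract hF hy i l k, pd_chr_contract hF hy i k l]
  rw [Finset.sum_comm]
  have hq : ∀ s : Fin n, ∑ j, (christoffel (gF F) y i s k * (christoffel (gF F) y s l j * y j)
      - christoffel (gF F) y i s l * (christoffel (gF F) y s k j * y j)) = 0 := by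
    intro s
    rw [Finset.sum_sub_distrib, ← Finset.mul_sum, ← Finset.mul_sum,
      chr_contract hF hy s l, chr_contract hF hy s k]
    ring
  rw [Finset.sum_congr rfl fun s _ => hq s]
  rw [chr_symm hF hy i l k]
  simp

/-- `Rⁱⱼₖₗ yˡ = 0`. -/
lemma riem_radial_l (hF : IsMinkowskiNorm n F) {y : Fin n → ℝ} (hy : y ≠ 0) (i j k : Fin n) :
    ∑ l, riem (gF F) y i j k l * y l = 0 := by
  unfold riem
  have expand : ∀ l : Fin n, (pd k (fun z => christoffel (gF F) z i j l) y
      - pd l (fun z => christoffel (gF F) z i j k) y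
      + ∑ s, (christoffel (gF F) y i s k * christoffel (gF F) y s j l
        - christoffel (gF F) y i s l * christoffel (gF F) y s j k)) * y l
      = pd k (fun z => christoffel (gF F) z i j l) y * y l
        - y l * pd l (fun z => christoffel (gF F) z i j k) y
        + ∑ s, (christoffel (gF F) y i s k * (christoffel (gF F) y s j l * y l)
          - (christoffel (gF F) y i s l * y l) * christoffel (gF F) y s j k) := by
    intro l
    rw [add_mul, sub_mul, Finset.sum_mul]
    congr 1
    · ring
    refine Finset.sum_congr rfl fun s _ => ?_
    ring
  rw [Finset.sum_congr rfl fun l _ => expand l]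
  rw [Finset.sum_add_distrib, Finset.sum_sub_distrib]
  rw [pd_chr_contract hF hy i j k, chr_euler hF hy i j k]
  rw [Finset.sum_comm]
  have hq : ∀ s : Fin n, ∑ l, (christoffel (gF F) y i s k * (christoffel (gF F) y s j l * y l)
      - (christoffel (gF F) y i s l * y l) * christoffel (gF F) y s j k) = 0 := by
    intro s
    rw [Finset.sum_sub_distrib, ← Finset.mul_sum, ← Finset.sum_mul,
      chr_contract hF hy s j, chr_contract hF hy i s]
    ring
  rw [Finset.sum_congr rfl fun s _ => hq s]
  simp

/-- `Rⁱⱼₖₗ yᵏ = 0`. -/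
lemma riem_radial_k (hF : IsMinkowskiNorm n F) {y : Fin n → ℝ} (hy : y ≠ 0) (i j l : Fin n) :
    ∑ k, riem (gF F) y i j k l * y k = 0 := by
  have : ∀ k, riem (gF F) y i j k l * y k = -(riem (gF F) y i j l k * y k) := by
    intro k; rw [riem_antisym (gF F) y i j k l]; ring
  rw [Finset.sum_congr rfl fun k _ => this k, Finset.sum_neg_distrib,
    riem_radial_l hF hy i j l, neg_zero]

/-- curvature is homogeneous of degree −2. -/
lemma riem_homog (hF : IsMinkowskiNorm n F) {t : ℝ} (ht : 0 < t) {y : Fin n → ℝ}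
    (hy : y ≠ 0) (i j k l : Fin n) :
    riem (gF F) (t • y) i j k l = t⁻¹ * (t⁻¹ * riem (gF F) y i j k l) := by
  have ht' : t ≠ 0 := ne_of_gt ht
  have pdh : ∀ a b c : Fin n, pd c (fun z => christoffel (gF F) z i a b) (t • y)
      = t⁻¹ * (t⁻¹ * pd c (fun z => christoffel (gF F) z i a b) y) := by
    intro a b c
    have h := pd_of_homog (u := fun z => christoffel (gF F) z i a b) (t := t) (c := t⁻¹)
      (chr_diff hF i a b (smul_ne_zero_of ht hy)) (chr_diff hF i a b hy) ?_ c
    · field_simp at h ⊢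
      nlinarith [h]
    · filter_upwards [isOpen_Omg.mem_nhds hy] with z hz
      exact chr_homog hF ht hz i a b
  unfold riem
  rw [pdh j l k, pdh j k l]
  have hq : ∑ s, (christoffel (gF F) (t • y) i s k * christoffel (gF F) (t • y) s j l
      - christoffel (gF F) (t • y) i s l * christoffel (gF F) (t • y) s j k)
      = t⁻¹ * (t⁻¹ * ∑ s, (christoffel (gF F) y i s k * christoffel (gF F) y s j l
        - christoffel (gF F) y i s l * christoffel (gF F) y s j k)) := by
    rw [Finset.mul_sum, Finset.mul_sum]
    refine Finset.sum_congr rfl fun s _ => ?_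
    rw [chr_homog hF ht hy i s k, chr_homog hF ht hy s j l, chr_homog hF ht hy i s l,
      chr_homog hF ht hy s j k]
    ring
  rw [hq]
  ring

end Curvature
section Lowered
open Topology Filter
variable {n : ℕ}

/-- lowered Christoffel symbol `Γ_{ijk} = ½(∂ₖg_{ij} + ∂ⱼg_{ik} − ∂ᵢg_{jk})`. -/
noncomputable def Gl (F : (Fin n → ℝ) → ℝ) (y : Fin n → ℝ) (i j k : Fin n) : ℝ :=
  (pd k (fun z => gF F z i j) y + pd j (fun z => gF F z i k) y
    - pd i (fun z => gF F z j k) y) / 2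

/-- lowered curvature tensor `R_{ijkl} = g_{is} Rˢ_{jkl}`. -/
noncomputable def Rl (F : (Fin n → ℝ) → ℝ) (y : Fin n → ℝ) (i j k l : Fin n) : ℝ :=
  ∑ s, gF F y i s * riem (gF F) y s j k l

variable {F : (Fin n → ℝ) → ℝ}

lemma pd_g_symm (hF : IsMinkowskiNorm n F) {y : Fin n → ℝ} (hy : y ≠ 0) (a i j : Fin n) :
    pd a (fun z => gF F z i j) y = pd a (fun z => gF F z j i) y := by
  refine pd_congr_nhds ?_ a
  filter_upwards [isOpen_Omg.mem_nhds hy] with z hz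
  exact g_symm hF hz i j

lemma Gl_symm (hF : IsMinkowskiNorm n F) {y : Fin n → ℝ} (hy : y ≠ 0) (i j k : Fin n) :
    Gl F y i j k = Gl F y i k j := by
  unfold Gl
  rw [pd_g_symm hF hy i j k, pd_g_symm hF hy i k j]
  ring

lemma Gl_smooth (hF : IsMinkowskiNorm n F) (i j k : Fin n) :
    ContDiffOn ℝ (⊤ : ℕ∞) (fun z => Gl F z i j k) (Omg n) :=
  (((contDiffOn_pd (g_smooth hF i j) k).add (contDiffOn_pd (g_smooth hF i k) j)).sub
    (contDiffOn_pd (g_smooth hF j k) i)).div_const 2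

lemma Gl_diff (hF : IsMinkowskiNorm n F) (i j k : Fin n) {y : Fin n → ℝ} (hy : y ≠ 0) :
    DifferentiableAt ℝ (fun z => Gl F z i j k) y := diffAt_of_cd (Gl_smooth hF i j k) hy

/-- `Γⁱⱼₖ = gⁱˢ Γ_{sjk}` -/
lemma chr_eq_ginv_Gl (F : (Fin n → ℝ) → ℝ) (y : Fin n → ℝ) (i j k : Fin n) :
    christoffel (gF F) y i j k = ∑ s, ginv (gF F) y i s * Gl F y s j k := by
  unfold christoffel Gl
  rw [Finset.mul_sum]
  refine Finset.sum_congr rfl fun s _ => ?_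
  ring

/-- `g_{iu} Γᵘⱼₖ = Γ_{ijk}` -/
lemma g_chr (hF : IsMinkowskiNorm n F) {y : Fin n → ℝ} (hy : y ≠ 0) (i j k : Fin n) :
    ∑ u, gF F y i u * christoffel (gF F) y u j k = Gl F y i j k := by
  have : ∀ u, gF F y i u * christoffel (gF F) y u j k
      = ∑ s, gF F y i u * ginv (gF F) y u s * Gl F y s j k := by
    intro u
    rw [chr_eq_ginv_Gl, Finset.mul_sum]
    exact Finset.sum_congr rfl fun s _ => by ring
  rw [Finset.sum_congr rfl fun u _ => this u, Finset.sum_comm]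
  have : ∀ s, ∑ u, gF F y i u * ginv (gF F) y u s * Gl F y s j k
      = (if i = s then 1 else 0) * Gl F y s j k := by
    intro s
    rw [← Finset.sum_mul, g_ginv hF hy i s]
  rw [Finset.sum_congr rfl fun s _ => this s]
  rw [Finset.sum_eq_single i] <;> simp +contextual [eq_comm]

/-- metric compatibility: `∂ₖ g_{ij} = Γ_{ijk} + Γ_{jik}` -/
lemma pd_g_eq_Gl (hF : IsMinkowskiNorm n F) {y : Fin n → ℝ} (hy : y ≠ 0) (i j k : Fin n) :
    pd k (fun z => gF F z i j) y = Gl F y i j k + Gl F y j i k := by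
  unfold Gl
  rw [pd_g_symm hF hy j i, pd_g_symm hF hy k j i, pd_g_symm hF hy i j k]
  ring

lemma Rl_radial_j (hF : IsMinkowskiNorm n F) {y : Fin n → ℝ} (hy : y ≠ 0) (i k l : Fin n) :
    ∑ j, Rl F y i j k l * y j = 0 := by
  unfold Rl
  have h1 : ∀ j, (∑ s, gF F y i s * riem (gF F) y s j k l) * y j
      = ∑ s, gF F y i s * (riem (gF F) y s j k l * y j) := by
    intro j
    rw [Finset.sum_mul]
    exact Finset.sum_congr rfl fun s _ => by ring
  rw [Finset.sum_congr rfl fun j _ => h1 j, Finset.sum_comm]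
  refine Finset.sum_eq_zero fun s _ => ?_
  rw [← Finset.mul_sum, riem_radial_j hF hy s k l, mul_zero]

lemma Rl_radial_k (hF : IsMinkowskiNorm n F) {y : Fin n → ℝ} (hy : y ≠ 0) (i j l : Fin n) :
    ∑ k, Rl F y i j k l * y k = 0 := by
  unfold Rl
  have h1 : ∀ k, (∑ s, gF F y i s * riem (gF F) y s j k l) * y k
      = ∑ s, gF F y i s * (riem (gF F) y s j k l * y k) := by
    intro k
    rw [Finset.sum_mul]
    exact Finset.sum_congr rfl fun s _ => by ring
  rw [Finset.sum_congr rfl fun k _ => h1 k, Finset.sum_comm]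
  refine Finset.sum_eq_zero fun s _ => ?_
  rw [← Finset.mul_sum, riem_radial_k hF hy s j l, mul_zero]

lemma Rl_radial_l (hF : IsMinkowskiNorm n F) {y : Fin n → ℝ} (hy : y ≠ 0) (i j k : Fin n) :
    ∑ l, Rl F y i j k l * y l = 0 := by
  unfold Rl
  have h1 : ∀ l, (∑ s, gF F y i s * riem (gF F) y s j k l) * y l
      = ∑ s, gF F y i s * (riem (gF F) y s j k l * y l) := by
    intro l
    rw [Finset.sum_mul]
    exact Finset.sum_congr rfl fun s _ => by ring
  rw [Finset.sum_congr rfl fun l _ => h1 l, Finset.sum_comm]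
  refine Finset.sum_eq_zero fun s _ => ?_
  rw [← Finset.mul_sum, riem_radial_l hF hy s j k, mul_zero]

lemma Rl_antisym_kl (F : (Fin n → ℝ) → ℝ) (y : Fin n → ℝ) (i j k l : Fin n) :
    Rl F y i j k l = - Rl F y i j l k := by
  unfold Rl
  rw [← Finset.sum_neg_distrib]
  refine Finset.sum_congr rfl fun s _ => ?_
  rw [riem_antisym (gF F) y s j k l]
  ring

lemma Rl_bianchi (hF : IsMinkowskiNorm n F) {y : Fin n → ℝ} (hy : y ≠ 0) (i j k l : Fin n) :
    Rl F y i j k l + Rl F y i k l j + Rl F y i l j k = 0 := by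
  unfold Rl
  rw [← Finset.sum_add_distrib, ← Finset.sum_add_distrib]
  refine Finset.sum_eq_zero fun s _ => ?_
  have := riem_bianchi hF hy s j k l
  calc gF F y i s * riem (gF F) y s j k l + gF F y i s * riem (gF F) y s k l j
        + gF F y i s * riem (gF F) y s l j k
      = gF F y i s * (riem (gF F) y s j k l + riem (gF F) y s k l j
        + riem (gF F) y s l j k) := by ring
    _ = 0 := by rw [this, mul_zero]

end Lowered
section LoweredSym
open Topology Filter
variable {n : ℕ} {F : (Fin n → ℝ) → ℝ}

/-- `∑ₛ g_{is} ∂_c Γˢₐᵦ = ∂_c Γ_{iab} − ∑ₛ (Γ_{isc} + Γ_{sic}) Γˢₐᵦ`. -/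
lemma sum_g_pd_chr (hF : IsMinkowskiNorm n F) {y : Fin n → ℝ} (hy : y ≠ 0) (i a b c : Fin n) :
    ∑ s, gF F y i s * pd c (fun z => christoffel (gF F) z s a b) y
      = pd c (fun z => Gl F z i a b) y
        - ∑ s, (Gl F y i s c + Gl F y s i c) * christoffel (gF F) y s a b := by
  have hpdsum : pd c (fun z => ∑ s, gF F z i s * christoffel (gF F) z s a b) y
      = ∑ s, (pd c (fun z => gF F z i s) y * christoffel (gF F) y s a b
        + gF F y i s * pd c (fun z => christoffel (gF F) z s a b) y) := by
    rw [pd_sum Finset.univ (f := fun s z => gF F z i s * christoffel (gF F) z s a b) (fun s _ => (g_diff hF i s hy).mul (chr_diff hF s a b hy)) c]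
    exact Finset.sum_congr rfl fun s _ =>
      pd_mul (g_diff hF i s hy) (chr_diff hF s a b hy) c
  have hcongr : pd c (fun z => ∑ s, gF F z i s * christoffel (gF F) z s a b) y
      = pd c (fun z => Gl F z i a b) y := by
    refine pd_congr_nhds ?_ c
    filter_upwards [isOpen_Omg.mem_nhds hy] with z hz
    exact g_chr hF hz i a b
  rw [hcongr] at hpdsum
  rw [Finset.sum_add_distrib] at hpdsum
  have h2 : ∑ s, pd c (fun z => gF F z i s) y * christoffel (gF F) y s a b
      = ∑ s, (Gl F y i s c + Gl F y s i c) * christoffel (gF F) y s a b := by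
    refine Finset.sum_congr rfl fun s _ => ?_
    rw [pd_g_eq_Gl hF hy i s c]
  rw [h2] at hpdsum
  linarith

/-- explicit formula for the lowered curvature. -/
lemma Rl_formula (hF : IsMinkowskiNorm n F) {y : Fin n → ℝ} (hy : y ≠ 0) (i j k l : Fin n) :
    Rl F y i j k l
      = pd k (fun z => Gl F z i j l) y - pd l (fun z => Gl F z i j k) y
        + ∑ s, (Gl F y s i l * christoffel (gF F) y s j k
          - Gl F y s i k * christoffel (gF F) y s j l) := by
  unfold Rl riem
  have split : ∀ s, gF F y i s * (pd k (fun z => christoffel (gF F) z s j l) y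
      - pd l (fun z => christoffel (gF F) z s j k) y
      + ∑ u, (christoffel (gF F) y s u k * christoffel (gF F) y u j l
        - christoffel (gF F) y s u l * christoffel (gF F) y u j k))
      = gF F y i s * pd k (fun z => christoffel (gF F) z s j l) y
        - gF F y i s * pd l (fun z => christoffel (gF F) z s j k) y
        + ∑ u, (gF F y i s * christoffel (gF F) y s u k * christoffel (gF F) y u j l
          - gF F y i s * christoffel (gF F) y s u l * christoffel (gF F) y u j k) := by
    intro s
    rw [mul_add, mul_sub, Finset.mul_sum]
    congr 1
    exact Finset.sum_congr rfl fun u _ => by ring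
  rw [Finset.sum_congr rfl fun s _ => split s, Finset.sum_add_distrib, Finset.sum_sub_distrib]
  rw [sum_g_pd_chr hF hy i j l k, sum_g_pd_chr hF hy i j k l]
  -- quadratic part
  have hq : ∑ s, ∑ u, (gF F y i s * christoffel (gF F) y s u k * christoffel (gF F) y u j l
      - gF F y i s * christoffel (gF F) y s u l * christoffel (gF F) y u j k)
      = ∑ u, (Gl F y i u k * christoffel (gF F) y u j l
        - Gl F y i u l * christoffel (gF F) y u j k) := by
    rw [Finset.sum_comm]
    refine Finset.sum_congr rfl fun u _ => ?_
    rw [Finset.sum_sub_distrib]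
    have e1 : ∑ s, gF F y i s * christoffel (gF F) y s u k * christoffel (gF F) y u j l
        = Gl F y i u k * christoffel (gF F) y u j l := by
      rw [← g_chr hF hy i u k, Finset.sum_mul]
    have e2 : ∑ s, gF F y i s * christoffel (gF F) y s u l * christoffel (gF F) y u j k
        = Gl F y i u l * christoffel (gF F) y u j k := by
      rw [← g_chr hF hy i u l, Finset.sum_mul]
    rw [e1, e2]
  rw [hq]
  have merge : ∑ s, (Gl F y i s k + Gl F y s i k) * christoffel (gF F) y s j l
      - (∑ s, (Gl F y i s l + Gl F y s i l) * christoffel (gF F) y s j k)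
      - (∑ s, (Gl F y i s k * christoffel (gF F) y s j l
        - Gl F y i s l * christoffel (gF F) y s j k))
      = ∑ s, (Gl F y s i k * christoffel (gF F) y s j l
        - Gl F y s i l * christoffel (gF F) y s j k) := by
    rw [← Finset.sum_sub_distrib, ← Finset.sum_sub_distrib]
    exact Finset.sum_congr rfl fun s _ => by ring
  have goal_eq : ∀ A B C D E : ℝ, (A - B) - (C - D) + E
      = A - C - (B - D) + E := by intros; ring
  -- rearrange manually
  have : ∑ s, (Gl F y s i l * christoffel (gF F) y s j k
      - Gl F y s i k * christoffel (gF F) y s j l)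
      = -(∑ s, (Gl F y s i k * christoffel (gF F) y s j l
        - Gl F y s i l * christoffel (gF F) y s j k)) := by
    rw [← Finset.sum_neg_distrib]
    exact Finset.sum_congr rfl fun s _ => by ring
  rw [this, ← merge]
  ring

/-- generic swap for double sums against `g⁻¹`. -/
lemma ginv_dsum_comm (hF : IsMinkowskiNorm n F) {y : Fin n → ℝ} (hy : y ≠ 0)
    (M : Fin n → Fin n → ℝ) :
    ∑ s, ∑ u, ginv (gF F) y s u * M s u = ∑ s, ∑ u, ginv (gF F) y s u * M u s := by
  rw [Finset.sum_comm]
  refine Finset.sum_congr rfl fun s _ => Finset.sum_congr rfl fun u _ => ?_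
  rw [ginv_symm hF hy u s]

/-- expand `∑ₛ (Γ_{sab}Γˢ_{cd} − Γ_{sa'b'}Γˢ_{c'd'})` into a `g⁻¹` double sum. -/
lemma Q_expand (hF : IsMinkowskiNorm n F) {y : Fin n → ℝ} (hy : y ≠ 0)
    (a b c d a' b' c' d' : Fin n) :
    ∑ s, (Gl F y s a b * christoffel (gF F) y s c d
      - Gl F y s a' b' * christoffel (gF F) y s c' d')
    = ∑ s, ∑ u, ginv (gF F) y s u *
      (Gl F y s a b * Gl F y u c d - Gl F y s a' b' * Gl F y u c' d') := by
  refine Finset.sum_congr rfl fun s _ => ?_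
  rw [chr_eq_ginv_Gl F y s c d, chr_eq_ginv_Gl F y s c' d', Finset.mul_sum, Finset.mul_sum,
    ← Finset.sum_sub_distrib]
  refine Finset.sum_congr rfl fun u _ => ?_
  ring

/-- pairing lemma: `∂_c Γ_{abd} + ∂_c Γ_{bad} = ∂_c ∂_d g_{ab}`. -/
lemma pd_Gl_pair (hF : IsMinkowskiNorm n F) {y : Fin n → ℝ} (hy : y ≠ 0) (a b c d : Fin n) :
    pd c (fun z => Gl F z a b d) y + pd c (fun z => Gl F z b a d) y
      = pd c (pd d (fun z => gF F z a b)) y := by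
  rw [← pd_add (Gl_diff hF a b d hy) (Gl_diff hF b a d hy) c]
  refine pd_congr_nhds ?_ c
  filter_upwards [isOpen_Omg.mem_nhds hy] with z hz
  exact (pd_g_eq_Gl hF hz a b d).symm

lemma Rl_antisym_ij (hF : IsMinkowskiNorm n F) {y : Fin n → ℝ} (hy : y ≠ 0) (i j k l : Fin n) :
    Rl F y i j k l = - Rl F y j i k l := by
  have hsum : Rl F y i j k l + Rl F y j i k l = 0 := by
    rw [Rl_formula hF hy i j k l, Rl_formula hF hy j i k l]
    have h1 := pd_Gl_pair hF hy i j k l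
    have h2 := pd_Gl_pair hF hy i j l k
    have hcomm := pd_symm (g_smooth hF i j) hy k l
    -- quadratic parts
    rw [Q_expand hF hy i l j k i k j l, Q_expand hF hy j l i k j k i l]
    have hswap := ginv_dsum_comm hF hy
      (fun s u => Gl F y s j l * Gl F y u i k - Gl F y s j k * Gl F y u i l)
    rw [hswap]
    have hq : ∑ s, ∑ u, ginv (gF F) y s u *
        (Gl F y s i l * Gl F y u j k - Gl F y s i k * Gl F y u j l)
        + ∑ s, ∑ u, ginv (gF F) y s u *
        (Gl F y u j l * Gl F y s i k - Gl F y u j k * Gl F y s i l) = 0 := by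
      rw [← Finset.sum_add_distrib]
      refine Finset.sum_eq_zero fun s _ => ?_
      rw [← Finset.sum_add_distrib]
      refine Finset.sum_eq_zero fun u _ => ?_
      ring
    linarith [hq, h1, h2, hcomm]
  linarith [hsum]

/-- second-derivative expansion of `∂_c Γ_{ijl}`. -/
lemma pd_Gl_expand (hF : IsMinkowskiNorm n F) {y : Fin n → ℝ} (hy : y ≠ 0) (i j l c : Fin n) :
    pd c (fun z => Gl F z i j l) y
      = (pd c (pd l (fun z => gF F z i j)) y + pd c (pd j (fun z => gF F z i l)) y
        - pd c (pd i (fun z => gF F z j l)) y) / 2 := by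
  have hfun : (fun z => Gl F z i j l) = fun z =>
      (1/2) * (pd l (fun w => gF F w i j) z + pd j (fun w => gF F w i l) z
        - pd i (fun w => gF F w j l) z) := by
    funext z; unfold Gl; ring
  rw [hfun]
  have d1 : DifferentiableAt ℝ (pd l (fun w => gF F w i j)) y :=
    diffAt_of_cd (contDiffOn_pd (g_smooth hF i j) l) hy
  have d2 : DifferentiableAt ℝ (pd j (fun w => gF F w i l)) y :=
    diffAt_of_cd (contDiffOn_pd (g_smooth hF i l) j) hy
  have d3 : DifferentiableAt ℝ (pd i (fun w => gF F w j l)) y :=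
    diffAt_of_cd (contDiffOn_pd (g_smooth hF j l) i) hy
  rw [pd_const_mul (f := fun z => pd l (fun w => gF F w i j) z + pd j (fun w => gF F w i l) z
      - pd i (fun w => gF F w j l) z) ((d1.add d2).sub d3) (1/2) c,
    pd_sub (f := fun z => pd l (fun w => gF F w i j) z + pd j (fun w => gF F w i l) z)
      (d1.add d2) d3 c, pd_add d1 d2 c]
  ring

/-- flip the metric indices under two derivatives. -/
lemma pd2_g_flip (hF : IsMinkowskiNorm n F) {y : Fin n → ℝ} (hy : y ≠ 0) (c d a b : Fin n) :
    pd c (pd d (fun z => gF F z a b)) y = pd c (pd d (fun z => gF F z b a)) y := by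
  refine pd_congr_nhds ?_ c
  filter_upwards [isOpen_Omg.mem_nhds hy] with z hz
  exact pd_g_symm hF hz d a b

lemma Rl_pairsym (hF : IsMinkowskiNorm n F) {y : Fin n → ℝ} (hy : y ≠ 0) (i j k l : Fin n) :
    Rl F y i j k l = Rl F y k l i j := by
  rw [Rl_formula hF hy i j k l, Rl_formula hF hy k l i j]
  rw [pd_Gl_expand hF hy i j l k, pd_Gl_expand hF hy i j k l,
    pd_Gl_expand hF hy k l j i, pd_Gl_expand hF hy k l i j]
  -- identify second-derivative terms
  have hA : pd i (pd j (fun z => gF F z k l)) y = pd j (pd i (fun z => gF F z k l)) y :=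
    pd_symm (g_smooth hF k l) hy i j
  have hB : pd i (pd l (fun z => gF F z k j)) y = pd l (pd i (fun z => gF F z j k)) y := by
    rw [pd2_g_flip hF hy i l k j, pd_symm (g_smooth hF j k) hy i l]
  have hC : pd i (pd k (fun z => gF F z l j)) y = pd k (pd i (fun z => gF F z j l)) y := by
    rw [pd2_g_flip hF hy i k l j, pd_symm (g_smooth hF j l) hy i k]
  have hD : pd j (pd l (fun z => gF F z k i)) y = pd l (pd j (fun z => gF F z i k)) y := by
    rw [pd2_g_flip hF hy j l k i, pd_symm (g_smooth hF i k) hy j l]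
  have hE : pd j (pd k (fun z => gF F z l i)) y = pd k (pd j (fun z => gF F z i l)) y := by
    rw [pd2_g_flip hF hy j k l i, pd_symm (g_smooth hF i l) hy j k]
  have hF' : pd k (pd l (fun z => gF F z i j)) y = pd l (pd k (fun z => gF F z i j)) y :=
    pd_symm (g_smooth hF i j) hy k l
  -- quadratic parts
  rw [Q_expand hF hy i l j k i k j l, Q_expand hF hy k j l i k i l j]
  have hquad : ∑ s, ∑ u, ginv (gF F) y s u *
      (Gl F y s i l * Gl F y u j k - Gl F y s i k * Gl F y u j l)
      = ∑ s, ∑ u, ginv (gF F) y s u *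
      (Gl F y s k j * Gl F y u l i - Gl F y s k i * Gl F y u l j) := by
    have lhs_eq : ∑ s, ∑ u, ginv (gF F) y s u *
        (Gl F y s i l * Gl F y u j k - Gl F y s i k * Gl F y u j l)
        = ∑ s, ∑ u, ginv (gF F) y s u *
        (Gl F y s l i * Gl F y u k j - Gl F y s k i * Gl F y u l j) := by
      refine Finset.sum_congr rfl fun s _ => Finset.sum_congr rfl fun u _ => ?_
      rw [Gl_symm hF hy s i l, Gl_symm hF hy u j k, Gl_symm hF hy s i k, Gl_symm hF hy u j l]
    rw [lhs_eq]
    have rhs_eq : ∑ s, ∑ u, ginv (gF F) y s u *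
        (Gl F y s k j * Gl F y u l i - Gl F y s k i * Gl F y u l j)
        = ∑ s, ∑ u, ginv (gF F) y s u *
        (Gl F y u k j * Gl F y s l i - Gl F y s k i * Gl F y u l j) := by
      have h1 := ginv_dsum_comm hF hy (fun s u => Gl F y s k j * Gl F y u l i)
      have h2 : ∀ (P : Fin n → Fin n → ℝ) (Q : Fin n → Fin n → ℝ),
          (∑ s, ∑ u, ginv (gF F) y s u * P s u = ∑ s, ∑ u, ginv (gF F) y s u * P u s) →
          ∑ s, ∑ u, ginv (gF F) y s u * (P s u - Q s u)
            = ∑ s, ∑ u, ginv (gF F) y s u * (P u s - Q s u) := by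
        intro P Q hP
        have e1 : ∀ v w : Fin n, ginv (gF F) y v w * (P v w - Q v w)
            = ginv (gF F) y v w * P v w - ginv (gF F) y v w * Q v w := fun v w => by ring
        have e2 : ∀ v w : Fin n, ginv (gF F) y v w * (P w v - Q v w)
            = ginv (gF F) y v w * P w v - ginv (gF F) y v w * Q v w := fun v w => by ring
        calc ∑ s, ∑ u, ginv (gF F) y s u * (P s u - Q s u)
            = ∑ s, ∑ u, (ginv (gF F) y s u * P s u - ginv (gF F) y s u * Q s u) := by
              exact Finset.sum_congr rfl fun s _ => Finset.sum_congr rfl fun u _ => e1 s u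
          _ = ∑ s, ∑ u, ginv (gF F) y s u * P s u - ∑ s, ∑ u, ginv (gF F) y s u * Q s u := by
              rw [← Finset.sum_sub_distrib]
              exact Finset.sum_congr rfl fun s _ => by rw [← Finset.sum_sub_distrib]
          _ = ∑ s, ∑ u, ginv (gF F) y s u * P u s - ∑ s, ∑ u, ginv (gF F) y s u * Q s u := by
              rw [hP]
          _ = ∑ s, ∑ u, ginv (gF F) y s u * (P u s - Q s u) := by
              rw [← Finset.sum_sub_distrib]
              refine Finset.sum_congr rfl fun s _ => ?_
              rw [← Finset.sum_sub_distrib]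
              exact Finset.sum_congr rfl fun u _ => (e2 s u).symm
      exact h2 (fun s u => Gl F y s k j * Gl F y u l i) (fun s u => Gl F y s k i * Gl F y u l j) h1
    rw [rhs_eq]
    refine Finset.sum_congr rfl fun s _ => Finset.sum_congr rfl fun u _ => ?_
    ring
  rw [hquad, hA, hB, hC, hD, hE, hF']
  ring

/-- reconstruct `riem` from `Rl`. -/
lemma riem_eq_ginv_Rl (hF : IsMinkowskiNorm n F) {y : Fin n → ℝ} (hy : y ≠ 0) (i j k l : Fin n) :
    riem (gF F) y i j k l = ∑ s, ginv (gF F) y i s * Rl F y s j k l := by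
  unfold Rl
  have : ∀ s, ginv (gF F) y i s * ∑ u, gF F y s u * riem (gF F) y u j k l
      = ∑ u, ginv (gF F) y i s * gF F y s u * riem (gF F) y u j k l := by
    intro s; rw [Finset.mul_sum]; exact Finset.sum_congr rfl fun u _ => by ring
  rw [Finset.sum_congr rfl fun s _ => this s, Finset.sum_comm]
  have h2 : ∀ u, ∑ s, ginv (gF F) y i s * gF F y s u * riem (gF F) y u j k l
      = (if i = u then 1 else 0) * riem (gF F) y u j k l := by
    intro u; rw [← Finset.sum_mul, ginv_g hF hy i u]
  rw [Finset.sum_congr rfl fun u _ => h2 u]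
  rw [Finset.sum_eq_single i] <;> simp +contextual [eq_comm]

lemma Rl_radial_i (hF : IsMinkowskiNorm n F) {y : Fin n → ℝ} (hy : y ≠ 0) (j k l : Fin n) :
    ∑ i, Rl F y i j k l * y i = 0 := by
  have : ∀ i, Rl F y i j k l * y i = -(Rl F y j i k l * y i) := by
    intro i; rw [Rl_antisym_ij hF hy i j k l]; ring
  rw [Finset.sum_congr rfl fun i _ => this i, Finset.sum_neg_distrib,
    Rl_radial_j hF hy j k l, neg_zero]

end LoweredSym
section Quadrilinear
open Topology Filter
variable {n : ℕ}

/-- sum rotation helpers -/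
lemma sum3_rot (g : Fin n → Fin n → Fin n → ℝ) :
    ∑ a, ∑ b, ∑ c, g a b c = ∑ b, ∑ c, ∑ a, g a b c := by
  rw [Finset.sum_comm]
  exact Finset.sum_congr rfl fun b _ => Finset.sum_comm

lemma sum3_rot' (g : Fin n → Fin n → Fin n → ℝ) :
    ∑ a, ∑ b, ∑ c, g a b c = ∑ c, ∑ a, ∑ b, g a b c := by
  rw [sum3_rot, sum3_rot]

lemma sum4_rot (f : Fin n → Fin n → Fin n → Fin n → ℝ) :
    ∑ a, ∑ b, ∑ c, ∑ d, f a b c d = ∑ b, ∑ c, ∑ d, ∑ a, f a b c d := by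
  rw [Finset.sum_comm]
  exact Finset.sum_congr rfl fun b _ => sum3_rot _

/-- the curvature 4-form `R(A,B,C,D) = R_{ijkl}AⁱBʲCᵏDˡ`. -/
noncomputable def Rq (F : (Fin n → ℝ) → ℝ) (y A B C D : Fin n → ℝ) : ℝ :=
  ∑ i, ∑ j, ∑ k, ∑ l, Rl F y i j k l * A i * B j * C k * D l

variable {F : (Fin n → ℝ) → ℝ}

lemma Rq_single (F : (Fin n → ℝ) → ℝ) (y : Fin n → ℝ) (i j k l : Fin n) :
    Rq F y (Pi.single i 1) (Pi.single j 1) (Pi.single k 1) (Pi.single l 1)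
      = Rl F y i j k l := by
  unfold Rq
  simp [Pi.single_apply, mul_ite, ite_mul, Finset.sum_ite_eq', eq_comm]

/-- linearity in each slot -/
lemma Rq_lin1 (y A B C D E : Fin n → ℝ) (a b : ℝ) :
    Rq F y (fun m => a * A m + b * E m) B C D
      = a * Rq F y A B C D + b * Rq F y E B C D := by
  unfold Rq
  rw [Finset.mul_sum, Finset.mul_sum, ← Finset.sum_add_distrib]
  refine Finset.sum_congr rfl fun i _ => ?_
  rw [Finset.mul_sum, Finset.mul_sum, ← Finset.sum_add_distrib]
  refine Finset.sum_congr rfl fun j _ => ?_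
  rw [Finset.mul_sum, Finset.mul_sum, ← Finset.sum_add_distrib]
  refine Finset.sum_congr rfl fun k _ => ?_
  rw [Finset.mul_sum, Finset.mul_sum, ← Finset.sum_add_distrib]
  refine Finset.sum_congr rfl fun l _ => ?_
  ring

lemma Rq_lin2 (y A B C D E : Fin n → ℝ) (a b : ℝ) :
    Rq F y A (fun m => a * B m + b * E m) C D
      = a * Rq F y A B C D + b * Rq F y A E C D := by
  unfold Rq
  rw [Finset.mul_sum, Finset.mul_sum, ← Finset.sum_add_distrib]
  refine Finset.sum_congr rfl fun i _ => ?_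
  rw [Finset.mul_sum, Finset.mul_sum, ← Finset.sum_add_distrib]
  refine Finset.sum_congr rfl fun j _ => ?_
  rw [Finset.mul_sum, Finset.mul_sum, ← Finset.sum_add_distrib]
  refine Finset.sum_congr rfl fun k _ => ?_
  rw [Finset.mul_sum, Finset.mul_sum, ← Finset.sum_add_distrib]
  refine Finset.sum_congr rfl fun l _ => ?_
  ring

lemma Rq_lin3 (y A B C D E : Fin n → ℝ) (a b : ℝ) :
    Rq F y A B (fun m => a * C m + b * E m) D
      = a * Rq F y A B C D + b * Rq F y A B E D := by
  unfold Rq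
  rw [Finset.mul_sum, Finset.mul_sum, ← Finset.sum_add_distrib]
  refine Finset.sum_congr rfl fun i _ => ?_
  rw [Finset.mul_sum, Finset.mul_sum, ← Finset.sum_add_distrib]
  refine Finset.sum_congr rfl fun j _ => ?_
  rw [Finset.mul_sum, Finset.mul_sum, ← Finset.sum_add_distrib]
  refine Finset.sum_congr rfl fun k _ => ?_
  rw [Finset.mul_sum, Finset.mul_sum, ← Finset.sum_add_distrib]
  refine Finset.sum_congr rfl fun l _ => ?_
  ring

lemma Rq_lin4 (y A B C D E : Fin n → ℝ) (a b : ℝ) :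
    Rq F y A B C (fun m => a * D m + b * E m)
      = a * Rq F y A B C D + b * Rq F y A B C E := by
  unfold Rq
  rw [Finset.mul_sum, Finset.mul_sum, ← Finset.sum_add_distrib]
  refine Finset.sum_congr rfl fun i _ => ?_
  rw [Finset.mul_sum, Finset.mul_sum, ← Finset.sum_add_distrib]
  refine Finset.sum_congr rfl fun j _ => ?_
  rw [Finset.mul_sum, Finset.mul_sum, ← Finset.sum_add_distrib]
  refine Finset.sum_congr rfl fun k _ => ?_
  rw [Finset.mul_sum, Finset.mul_sum, ← Finset.sum_add_distrib]
  refine Finset.sum_congr rfl fun l _ => ?_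
  ring

/-- radial vanishing in each slot -/
lemma Rq_rad1 (hF : IsMinkowskiNorm n F) {y : Fin n → ℝ} (hy : y ≠ 0) (B C D : Fin n → ℝ) :
    Rq F y y B C D = 0 := by
  unfold Rq
  rw [sum4_rot]
  refine Finset.sum_eq_zero fun j _ => ?_
  refine Finset.sum_eq_zero fun k _ => ?_
  refine Finset.sum_eq_zero fun l _ => ?_
  have : ∀ i, Rl F y i j k l * y i * B j * C k * D l
      = (B j * C k * D l) * (Rl F y i j k l * y i) := fun i => by ring
  rw [Finset.sum_congr rfl fun i _ => this i, ← Finset.mul_sum,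
    Rl_radial_i hF hy j k l, mul_zero]

lemma Rq_rad2 (hF : IsMinkowskiNorm n F) {y : Fin n → ℝ} (hy : y ≠ 0) (A C D : Fin n → ℝ) :
    Rq F y A y C D = 0 := by
  unfold Rq
  refine Finset.sum_eq_zero fun i _ => ?_
  rw [sum3_rot]
  refine Finset.sum_eq_zero fun k _ => ?_
  refine Finset.sum_eq_zero fun l _ => ?_
  have : ∀ j, Rl F y i j k l * A i * y j * C k * D l
      = (A i * C k * D l) * (Rl F y i j k l * y j) := fun j => by ring
  rw [Finset.sum_congr rfl fun j _ => this j, ← Finset.mul_sum,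
    Rl_radial_j hF hy i k l, mul_zero]

lemma Rq_rad3 (hF : IsMinkowskiNorm n F) {y : Fin n → ℝ} (hy : y ≠ 0) (A B D : Fin n → ℝ) :
    Rq F y A B y D = 0 := by
  unfold Rq
  refine Finset.sum_eq_zero fun i _ => ?_
  refine Finset.sum_eq_zero fun j _ => ?_
  rw [Finset.sum_comm]
  refine Finset.sum_eq_zero fun l _ => ?_
  have : ∀ k, Rl F y i j k l * A i * B j * y k * D l
      = (A i * B j * D l) * (Rl F y i j k l * y k) := fun k => by ring
  rw [Finset.sum_congr rfl fun k _ => this k, ← Finset.mul_sum,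
    Rl_radial_k hF hy i j l, mul_zero]

lemma Rq_rad4 (hF : IsMinkowskiNorm n F) {y : Fin n → ℝ} (hy : y ≠ 0) (A B C : Fin n → ℝ) :
    Rq F y A B C y = 0 := by
  unfold Rq
  refine Finset.sum_eq_zero fun i _ => ?_
  refine Finset.sum_eq_zero fun j _ => ?_
  refine Finset.sum_eq_zero fun k _ => ?_
  have : ∀ l, Rl F y i j k l * A i * B j * C k * y l
      = (A i * B j * C k) * (Rl F y i j k l * y l) := fun l => by ring
  rw [Finset.sum_congr rfl fun l _ => this l, ← Finset.mul_sum,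
    Rl_radial_l hF hy i j k, mul_zero]

/-- symmetries at the vector level -/
lemma Rq_antisym12 (hF : IsMinkowskiNorm n F) {y : Fin n → ℝ} (hy : y ≠ 0)
    (A B C D : Fin n → ℝ) : Rq F y A B C D = - Rq F y B A C D := by
  unfold Rq
  rw [Finset.sum_comm]
  rw [← Finset.sum_neg_distrib]
  refine Finset.sum_congr rfl fun i _ => ?_
  rw [← Finset.sum_neg_distrib]
  refine Finset.sum_congr rfl fun j _ => ?_
  rw [← Finset.sum_neg_distrib]
  refine Finset.sum_congr rfl fun k _ => ?_
  rw [← Finset.sum_neg_distrib]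
  refine Finset.sum_congr rfl fun l _ => ?_
  rw [Rl_antisym_ij hF hy i j k l]
  ring

lemma Rq_antisym34 (F : (Fin n → ℝ) → ℝ) (y A B C D : Fin n → ℝ) :
    Rq F y A B C D = - Rq F y A B D C := by
  unfold Rq
  rw [← Finset.sum_neg_distrib]
  refine Finset.sum_congr rfl fun i _ => ?_
  rw [← Finset.sum_neg_distrib]
  refine Finset.sum_congr rfl fun j _ => ?_
  rw [Finset.sum_comm, ← Finset.sum_neg_distrib]
  refine Finset.sum_congr rfl fun k _ => ?_
  rw [← Finset.sum_neg_distrib]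
  refine Finset.sum_congr rfl fun l _ => ?_
  rw [Rl_antisym_kl F y i j k l]
  ring

lemma sum4_add (f g : Fin n → Fin n → Fin n → Fin n → ℝ) :
    (∑ i, ∑ j, ∑ k, ∑ l, f i j k l) + (∑ i, ∑ j, ∑ k, ∑ l, g i j k l)
      = ∑ i, ∑ j, ∑ k, ∑ l, (f i j k l + g i j k l) := by
  rw [← Finset.sum_add_distrib]
  refine Finset.sum_congr rfl fun i _ => ?_
  rw [← Finset.sum_add_distrib]
  refine Finset.sum_congr rfl fun j _ => ?_
  rw [← Finset.sum_add_distrib]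
  refine Finset.sum_congr rfl fun k _ => ?_
  rw [← Finset.sum_add_distrib]

lemma Rq_pairsym (hF : IsMinkowskiNorm n F) {y : Fin n → ℝ} (hy : y ≠ 0)
    (A B C D : Fin n → ℝ) : Rq F y A B C D = Rq F y C D A B := by
  have e1 : Rq F y C D A B
      = ∑ k, ∑ l, ∑ i, ∑ j, Rl F y i j k l * C i * D j * A k * B l := by
    unfold Rq
    rw [sum4_rot (fun i j k l => Rl F y i j k l * C i * D j * A k * B l)]
    rw [sum4_rot (fun j k l i => Rl F y i j k l * C i * D j * A k * B l)]
  rw [e1]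
  unfold Rq
  refine Finset.sum_congr rfl fun i _ => Finset.sum_congr rfl fun j _ =>
    Finset.sum_congr rfl fun k _ => Finset.sum_congr rfl fun l _ => ?_
  rw [Rl_pairsym hF hy k l i j]
  ring

lemma Rq_bianchi (hF : IsMinkowskiNorm n F) {y : Fin n → ℝ} (hy : y ≠ 0)
    (A B C D : Fin n → ℝ) :
    Rq F y A B C D + Rq F y A C D B + Rq F y A D B C = 0 := by
  have e2 : Rq F y A C D B
      = ∑ i, ∑ j, ∑ k, ∑ l, Rl F y i k l j * A i * C k * D l * B j := by
    unfold Rq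
    exact Finset.sum_congr rfl fun i _ =>
      sum3_rot' (fun a b c => Rl F y i a b c * A i * C a * D b * B c)
  have e3 : Rq F y A D B C
      = ∑ i, ∑ j, ∑ k, ∑ l, Rl F y i l j k * A i * D l * B j * C k := by
    unfold Rq
    exact Finset.sum_congr rfl fun i _ =>
      sum3_rot (fun a b c => Rl F y i a b c * A i * D a * B b * C c)
  rw [e2, e3]
  unfold Rq
  rw [sum4_add, sum4_add]
  refine Finset.sum_eq_zero fun i _ => ?_
  refine Finset.sum_eq_zero fun j _ => ?_
  refine Finset.sum_eq_zero fun k _ => ?_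
  refine Finset.sum_eq_zero fun l _ => ?_
  have hb := Rl_bianchi hF hy i j k l
  linear_combination hb * (A i * B j * C k * D l)

end Quadrilinear
section Polarization
open Topology Filter
variable {n : ℕ} {F : (Fin n → ℝ) → ℝ}

lemma Rq_diag_self_zero (hF : IsMinkowskiNorm n F) {y : Fin n → ℝ} (hy : y ≠ 0)
    (V C D : Fin n → ℝ) : Rq F y V V C D = 0 := by
  have h := Rq_antisym12 hF hy V V C D
  linarith

lemma polarization (hF : IsMinkowskiNorm n F) {y : Fin n → ℝ} (hy : y ≠ 0)
    (tang : (Fin n → ℝ) → Prop)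
    (hadd : ∀ U V, tang U → tang V → tang (fun m => U m + V m))
    (H0 : ∀ U V, tang U → tang V → Rq F y U V U V = 0) :
    ∀ U V W X, tang U → tang V → tang W → tang X → Rq F y U V W X = 0 := by
  -- Step 1
  have step1 : ∀ U V W, tang U → tang V → tang W → Rq F y U V W V = 0 := by
    intro U V W hU hV hW
    have hexp : Rq F y (fun m => U m + W m) V (fun m => U m + W m) V
        = Rq F y U V U V + Rq F y U V W V + Rq F y W V U V + Rq F y W V W V := by
      have e1 : (fun m => U m + W m) = fun m => 1 * U m + 1 * W m := by
        funext m; ring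
      rw [e1, Rq_lin1 y U V (fun m => 1 * U m + 1 * W m) V W 1 1,
        Rq_lin3 y U V U V W 1 1, Rq_lin3 y W V U V W 1 1]
      ring
    have h0 := H0 _ _ (hadd U W hU hW) hV
    rw [h0] at hexp
    have hUU := H0 U V hU hV
    have hWW := H0 W V hW hV
    have hps : Rq F y W V U V = Rq F y U V W V := Rq_pairsym hF hy W V U V
    rw [hUU, hWW, hps] at hexp
    linarith
  -- Step 2 : swap slots 2 and 4 gives a sign
  have step2 : ∀ U V W X, tang U → tang V → tang W → tang X →
      Rq F y U V W X = - Rq F y U X W V := by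
    intro U V W X hU hV hW hX
    have hexp : Rq F y U (fun m => V m + X m) W (fun m => V m + X m)
        = Rq F y U V W V + Rq F y U V W X + Rq F y U X W V + Rq F y U X W X := by
      have e1 : (fun m => V m + X m) = fun m => 1 * V m + 1 * X m := by funext m; ring
      rw [e1, Rq_lin2 y U V W (fun m => 1 * V m + 1 * X m) X 1 1,
        Rq_lin4 y U V W V X 1 1, Rq_lin4 y U X W V X 1 1]
      ring
    have h0 := step1 U (fun m => V m + X m) W hU (hadd V X hV hX) hW
    rw [h0] at hexp
    rw [step1 U V W hU hV hW, step1 U X W hU hX hW] at hexp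
    linarith
  -- Step 3 : Bianchi finishes
  intro U V W X hU hV hW hX
  have e1 : Rq F y U W X V = Rq F y U V W X := by
    have h1 := step2 U W X V hU hW hX hV
    have h2 := Rq_antisym34 F y U V X W
    -- h1 : Rq U W X V = - Rq U V X W ; h2 : Rq U V X W = - Rq U V W X
    rw [h2] at h1
    linarith [h1]
  have e2 : Rq F y U X V W = Rq F y U V W X := by
    have h1 := Rq_antisym34 F y U X V W
    have h2 := step2 U X W V hU hX hW hV
    -- h1 : Rq U X V W = - Rq U X W V; h2 : Rq U X W V = - Rq U V W X?
    -- step2 U X W V : Rq U X W V = - Rq U V W X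
    rw [h2] at h1
    linarith [h1]
  have hb := Rq_bianchi hF hy U V W X
  -- Rq U V W X + Rq U W X V + Rq U X V W = 0
  rw [e1, e2] at hb
  linarith

end Polarization

section Umbilic
open Topology Filter
variable {n : ℕ} {F : (Fin n → ℝ) → ℝ}

lemma gmet_smul_left (G : (Fin n → ℝ) → Fin n → Fin n → ℝ) (y U V : Fin n → ℝ) (c : ℝ) :
    gmet G y (fun m => c * U m) V = c * gmet G y U V := by
  unfold gmet
  rw [Finset.mul_sum]
  refine Finset.sum_congr rfl fun i _ => ?_
  rw [Finset.mul_sum]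
  refine Finset.sum_congr rfl fun j _ => ?_
  ring

lemma gmet_zero_left (G : (Fin n → ℝ) → Fin n → Fin n → ℝ) (y V : Fin n → ℝ)
    (W : Fin n → ℝ) (hW : ∀ i, W i = 0) : gmet G y W V = 0 := by
  unfold gmet
  refine Finset.sum_eq_zero fun i _ => Finset.sum_eq_zero fun j _ => ?_
  rw [hW i]; ring

lemma gmet_symm (hF : IsMinkowskiNorm n F) {y : Fin n → ℝ} (hy : y ≠ 0) (U V : Fin n → ℝ) :
    gmet (gF F) y U V = gmet (gF F) y V U := by
  unfold gmet
  rw [Finset.sum_comm]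
  refine Finset.sum_congr rfl fun i _ => Finset.sum_congr rfl fun j _ => ?_
  rw [g_symm hF hy j i]
  ring

/-- the radial field `z/r₀` is umbilic: `∇_X (z/r₀) = r₀⁻¹ X`. -/
lemma covVec_radial (hF : IsMinkowskiNorm n F) {y : Fin n → ℝ} (hy : y ≠ 0) (r₀ : ℝ)
    (X : Fin n → ℝ) :
    covVec (gF F) (fun z => r₀⁻¹ • z) X y = fun i => r₀⁻¹ * X i := by
  funext i
  unfold covVec
  have h1 : (fun z : Fin n → ℝ => (r₀⁻¹ • z) i) = fun z => r₀⁻¹ * z i := by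
    funext z; simp [Pi.smul_apply]
  have h2 : fderiv ℝ (fun z : Fin n → ℝ => (r₀⁻¹ • z) i) y X = r₀⁻¹ * X i := by
    rw [h1]
    rw [fderiv_const_mul (differentiableAt_coord y i)]
    have : fderiv ℝ (fun z : Fin n → ℝ => z i) y X = X i := by
      have hproj : (fun z : Fin n → ℝ => z i)
          = (ContinuousLinearMap.proj i : (Fin n → ℝ) →L[ℝ] ℝ) := rfl
      rw [hproj, ContinuousLinearMap.fderiv]
      rfl
    simp [this]
  rw [h2]
  have h3 : ∑ j, ∑ k, christoffel (gF F) y i j k * X j * (r₀⁻¹ • y) k = 0 := by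
    refine Finset.sum_eq_zero fun j _ => ?_
    have : ∀ k, christoffel (gF F) y i j k * X j * (r₀⁻¹ • y) k
        = (X j * r₀⁻¹) * (christoffel (gF F) y i j k * y k) := by
      intro k; simp [Pi.smul_apply]; ring
    rw [Finset.sum_congr rfl fun k _ => this k, ← Finset.mul_sum,
      chr_contract hF hy i j, mul_zero]
  rw [h3, add_zero]

/-- the Gauss-equation sectional curvature of the level set. -/
lemma hypSec_eq (hF : IsMinkowskiNorm n F) {y : Fin n → ℝ} (hy : y ≠ 0) {r₀ : ℝ}
    (hr : r₀ ≠ 0) (U V : Fin n → ℝ)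
    (hD : gmet (gF F) y U U * gmet (gF F) y V V - gmet (gF F) y U V ^ 2 ≠ 0) :
    hypSec (gF F) (fun z => r₀⁻¹ • z) y U V = ambSec (gF F) y U V + 1 / r₀ ^ 2 := by
  unfold hypSec
  rw [covVec_radial hF hy r₀ U, covVec_radial hF hy r₀ V]
  rw [gmet_smul_left (gF F) y U U r₀⁻¹, gmet_smul_left (gF F) y V V r₀⁻¹,
    gmet_smul_left (gF F) y U V r₀⁻¹]
  congr 1
  have : r₀⁻¹ * gmet (gF F) y U U * (r₀⁻¹ * gmet (gF F) y V V)
      - (r₀⁻¹ * gmet (gF F) y U V) ^ 2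
      = (1 / r₀ ^ 2) * (gmet (gF F) y U U * gmet (gF F) y V V
        - gmet (gF F) y U V ^ 2) := by
    field_simp
  rw [this, mul_div_assoc, div_self hD, mul_one]

end Umbilic
section CS
open Topology Filter
variable {n : ℕ} {F : (Fin n → ℝ) → ℝ}

lemma gmet_comb (G : (Fin n → ℝ) → Fin n → Fin n → ℝ) (y A B : Fin n → ℝ) (p q : ℝ) :
    gmet G y (fun m => p * A m + q * B m) (fun m => p * A m + q * B m)
      = p ^ 2 * gmet G y A A + p * q * gmet G y A B + q * p * gmet G y B A
        + q ^ 2 * gmet G y B B := by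
  unfold gmet
  rw [Finset.mul_sum, Finset.mul_sum, Finset.mul_sum, Finset.mul_sum,
    ← Finset.sum_add_distrib, ← Finset.sum_add_distrib, ← Finset.sum_add_distrib]
  refine Finset.sum_congr rfl fun i _ => ?_
  rw [Finset.mul_sum, Finset.mul_sum, Finset.mul_sum, Finset.mul_sum,
    ← Finset.sum_add_distrib, ← Finset.sum_add_distrib, ← Finset.sum_add_distrib]
  refine Finset.sum_congr rfl fun j _ => ?_
  ring

/-- strict Cauchy–Schwarz for the positive definite metric. -/
lemma D_pos (hF : IsMinkowskiNorm n F) {y : Fin n → ℝ} (hy : y ≠ 0) {U V : Fin n → ℝ}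
    (hind : LinearIndependent ℝ ![U, V]) :
    0 < gmet (gF F) y U U * gmet (gF F) y V V - gmet (gF F) y U V ^ 2 := by
  have hU : U ≠ 0 := by
    have := hind.ne_zero 0
    simpa using this
  have hV : V ≠ 0 := by
    have := hind.ne_zero 1
    simpa using this
  set a := gmet (gF F) y U U with ha_def
  set b := gmet (gF F) y U V with hb_def
  set c := gmet (gF F) y V V with hc_def
  have ha : 0 < a := hF.posdef y hy U hU
  have hfin2 := linearIndependent_fin2.mp hind
  have hVU : ∀ t : ℝ, t • V ≠ U := by
    have h2 := hfin2.2
    intro t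
    simpa using h2 t
  set W : Fin n → ℝ := fun m => a * V m + (-b) * U m with hW_def
  have hW : W ≠ 0 := by
    intro hW0
    have hWm : ∀ m, a * V m - b * U m = 0 := by
      intro m
      have h := congrFun hW0 m
      simp only [hW_def, Pi.zero_apply] at h
      linarith
    by_cases hb : b = 0
    · apply hV
      funext m
      have := hWm m
      rw [hb] at this
      have : a * V m = 0 := by linarith
      have := mul_eq_zero.mp this
      rcases this with h | h
      · exact absurd h (ne_of_gt ha)
      · simpa using h
    · apply hVU (a / b)
      funext m
      have := hWm m
      simp only [Pi.smul_apply, smul_eq_mul]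
      rw [div_mul_eq_mul_div, div_eq_iff hb]
      linarith [hWm m]
  have hpos := hF.posdef y hy W hW
  have hexp : gmet (gF F) y W W = a * (a * c - b ^ 2) := by
    rw [hW_def, gmet_comb (gF F) y V U a (-b)]
    have hsym : gmet (gF F) y V U = b := (gmet_symm hF hy V U).trans hb_def.symm
    rw [hsym, ← hc_def, ← ha_def]
    ring
  rw [hexp] at hpos
  nlinarith [hpos, ha]

end CS

section Assembly
open Topology Filter
variable {n : ℕ} {F : (Fin n → ℝ) → ℝ}

lemma F_zero (hF : IsMinkowskiNorm n F) : F 0 = 0 := by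
  have h := hF.homog 2 (by norm_num) 0
  rw [smul_zero] at h
  linarith

lemma F_pos_ne (hF : IsMinkowskiNorm n F) {y : Fin n → ℝ} {r₀ : ℝ} (hr : 0 < r₀)
    (hFy : F y = r₀) : y ≠ 0 := by
  intro h0
  rw [h0, F_zero hF] at hFy
  linarith

lemma fderiv_F_self (hF : IsMinkowskiNorm n F) {y : Fin n → ℝ} (hy : y ≠ 0) :
    fderiv ℝ F y y = F y := by
  have hdF : DifferentiableAt ℝ F y := diffAt_of_cd hF.smooth hy
  have he := euler (u := F) hdF 1 ?_
  · rw [fderiv_eq_sum_pd hdF y]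
    simpa using he
  · filter_upwards [eventually_gt_nhds (zero_lt_one (α := ℝ))] with t ht
    rw [hF.homog t ht]
    simp

/-- the inner product against the curvature operator is the 4-form. -/
lemma gmet_riemVec_eq_Rq (hF : IsMinkowskiNorm n F) {y : Fin n → ℝ} (hy : y ≠ 0)
    (U V : Fin n → ℝ) :
    gmet (gF F) y (riemVec (gF F) y V U V) U = Rq F y U V V U := by
  unfold gmet riemVec Rq Rl
  -- LHS = ∑ i ∑ m g_{im} * (∑_{jkl} R^i_{jkl} V_j V_k U_l) * U_m
  have lhs_eq : ∑ i, ∑ m, gF F y i m * (∑ j, ∑ k, ∑ l,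
      riem (gF F) y i j k l * V j * V k * U l) * U m
      = ∑ m, ∑ i, ∑ j, ∑ k, ∑ l,
        gF F y i m * riem (gF F) y i j k l * V j * V k * U l * U m := by
    rw [Finset.sum_comm]
    refine Finset.sum_congr rfl fun m _ => Finset.sum_congr rfl fun i _ => ?_
    rw [Finset.mul_sum, Finset.sum_mul]
    refine Finset.sum_congr rfl fun j _ => ?_
    rw [Finset.mul_sum, Finset.sum_mul]
    refine Finset.sum_congr rfl fun k _ => ?_
    rw [Finset.mul_sum, Finset.sum_mul]
    refine Finset.sum_congr rfl fun l _ => ?_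
    ring
  rw [lhs_eq]
  refine Finset.sum_congr rfl fun m _ => ?_
  -- rotate i to the innermost position
  rw [sum4_rot (fun i j k l => gF F y i m * riem (gF F) y i j k l * V j * V k * U l * U m)]
  refine Finset.sum_congr rfl fun j _ => Finset.sum_congr rfl fun k _ =>
    Finset.sum_congr rfl fun l _ => ?_
  rw [Finset.sum_mul, Finset.sum_mul, Finset.sum_mul, Finset.sum_mul]
  refine Finset.sum_congr rfl fun i _ => ?_
  rw [g_symm hF hy i m]
  ring

/-- pointwise flatness from vanishing of the 4-form on the tangent space. -/
lemma riem_zero_of_tangent (hF : IsMinkowskiNorm n F) {y : Fin n → ℝ} {r₀ : ℝ}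
    (hr : 0 < r₀) (hFy : F y = r₀)
    (H0 : ∀ U V : Fin n → ℝ, fderiv ℝ F y U = 0 → fderiv ℝ F y V = 0 →
      Rq F y U V U V = 0) :
    ∀ i j k l, riem (gF F) y i j k l = 0 := by
  have hy : y ≠ 0 := F_pos_ne hF hr hFy
  set ℓ := fderiv ℝ F y with hl_def
  have hly : ℓ y = r₀ := by rw [hl_def, fderiv_F_self hF hy, hFy]
  have hr' : r₀ ≠ 0 := ne_of_gt hr
  -- tangent projection
  set P : (Fin n → ℝ) → (Fin n → ℝ) := fun X => fun m => X m - ℓ X / r₀ * y m with hP_def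
  have hPt : ∀ X, ℓ (P X) = 0 := by
    intro X
    have : P X = X - (ℓ X / r₀) • y := by
      funext m; simp [hP_def]
    rw [this, map_sub, map_smul]
    rw [smul_eq_mul, hly]
    rw [div_mul_cancel₀ _ hr', sub_self]
  -- all tangent 4-tuples vanish
  have htang := polarization hF hy (fun X => ℓ X = 0)
    (fun U V hU hV => by
      show ℓ (fun m => U m + V m) = 0
      have he : (fun m => U m + V m) = U + V := rfl
      rw [he, map_add, show ℓ U = 0 from hU, show ℓ V = 0 from hV, add_zero])
    (fun U V hU hV => H0 U V hU hV)
  -- reduce arbitrary arguments to tangent ones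
  have hred : ∀ A B C D : Fin n → ℝ,
      Rq F y A B C D = Rq F y (P A) (P B) (P C) (P D) := by
    intro A B C D
    have e1 : ∀ X : Fin n → ℝ, X = fun m => 1 * P X m + (ℓ X / r₀) * y m := by
      intro X
      funext m
      simp [hP_def]
    calc Rq F y A B C D
        = Rq F y (fun m => 1 * P A m + (ℓ A / r₀) * y m) B C D := by rw [← e1 A]
      _ = Rq F y (P A) B C D := by
          rw [Rq_lin1 y (P A) B C D y 1 (ℓ A / r₀), Rq_rad1 hF hy B C D]
          ring
      _ = Rq F y (P A) (fun m => 1 * P B m + (ℓ B / r₀) * y m) C D := by rw [← e1 B]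
      _ = Rq F y (P A) (P B) C D := by
          rw [Rq_lin2 y (P A) (P B) C D y 1 (ℓ B / r₀), Rq_rad2 hF hy (P A) C D]
          ring
      _ = Rq F y (P A) (P B) (fun m => 1 * P C m + (ℓ C / r₀) * y m) D := by rw [← e1 C]
      _ = Rq F y (P A) (P B) (P C) D := by
          rw [Rq_lin3 y (P A) (P B) (P C) D y 1 (ℓ C / r₀), Rq_rad3 hF hy (P A) (P B) D]
          ring
      _ = Rq F y (P A) (P B) (P C) (fun m => 1 * P D m + (ℓ D / r₀) * y m) := by rw [← e1 D]
      _ = Rq F y (P A) (P B) (P C) (P D) := by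
          rw [Rq_lin4 y (P A) (P B) (P C) (P D) y 1 (ℓ D / r₀),
            Rq_rad4 hF hy (P A) (P B) (P C)]
          ring
  have hRq0 : ∀ A B C D : Fin n → ℝ, Rq F y A B C D = 0 := by
    intro A B C D
    rw [hred A B C D]
    exact htang _ _ _ _ (hPt A) (hPt B) (hPt C) (hPt D)
  have hRl0 : ∀ i j k l, Rl F y i j k l = 0 := by
    intro i j k l
    rw [← Rq_single F y i j k l]
    exact hRq0 _ _ _ _
  intro i j k l
  rw [riem_eq_ginv_Rl hF hy i j k l]
  refine Finset.sum_eq_zero fun s _ => ?_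
  rw [hRl0 s j k l, mul_zero]

end Assembly
/-- `(ℝⁿ∖{0}, ĝ)` is flat if and only if for some `r₀ > 0` the level
hypersurface `S(r₀)` (with its induced metric) has constant sectional curvature `1/r₀²`. -/
theorem flat_iff_level_constant_curvature {n : ℕ} (F : (Fin n → ℝ) → ℝ)
    (hF : IsMinkowskiNorm n F) :
    (∀ y : Fin n → ℝ, y ≠ 0 → ∀ i j k l : Fin n, riem (gF F) y i j k l = 0) ↔
    (∃ r₀ : ℝ, 0 < r₀ ∧ ∀ y : Fin n → ℝ, F y = r₀ →
      ∀ U V : Fin n → ℝ, fderiv ℝ F y U = 0 → fderiv ℝ F y V = 0 →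
        LinearIndependent ℝ ![U, V] →
          hypSec (gF F) (fun z => r₀⁻¹ • z) y U V = 1 / r₀ ^ 2) := by
  constructor
  · -- flat ⟹ constant curvature of S(1)
    intro hflat
    refine ⟨1, one_pos, ?_⟩
    intro y hFy U V hU hV hind
    have hy : y ≠ 0 := F_pos_ne hF one_pos hFy
    have hD := D_pos hF hy hind
    have hD' : gmet (gF F) y U U * gmet (gF F) y V V - gmet (gF F) y U V ^ 2 ≠ 0 :=
      ne_of_gt hD
    rw [hypSec_eq hF hy one_ne_zero U V hD']
    have hnum : gmet (gF F) y (riemVec (gF F) y V U V) U = 0 := by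
      refine gmet_zero_left (gF F) y U _ fun i => ?_
      unfold riemVec
      refine Finset.sum_eq_zero fun j _ => Finset.sum_eq_zero fun k _ =>
        Finset.sum_eq_zero fun l _ => ?_
      rw [hflat y hy i j k l]
      ring
    have hamb : ambSec (gF F) y U V = 0 := by
      unfold ambSec
      rw [hnum, zero_div]
    rw [hamb, zero_add]
  · -- constant curvature of some S(r₀) ⟹ flat
    rintro ⟨r₀, hr, H⟩
    intro w hw i j k l
    have hFw : 0 < F w := hF.pos w hw
    set t : ℝ := r₀ / F w with ht_def
    have ht : 0 < t := div_pos hr hFw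
    set y : Fin n → ℝ := t • w with hy_def
    have hFy : F y = r₀ := by
      rw [hy_def, hF.homog t ht w, ht_def]
      field_simp
    have hy : y ≠ 0 := F_pos_ne hF hr hFy
    have H0 : ∀ U V : Fin n → ℝ, fderiv ℝ F y U = 0 → fderiv ℝ F y V = 0 →
        Rq F y U V U V = 0 := by
      intro U V hU hV
      by_cases hind : LinearIndependent ℝ ![U, V]
      · have hs := H y hFy U V hU hV hind
        have hD := D_pos hF hy hind
        have hD' : gmet (gF F) y U U * gmet (gF F) y V V - gmet (gF F) y U V ^ 2 ≠ 0 :=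
          ne_of_gt hD
        rw [hypSec_eq hF hy (ne_of_gt hr) U V hD'] at hs
        have hamb : ambSec (gF F) y U V = 0 := by linarith
        have hnum : gmet (gF F) y (riemVec (gF F) y V U V) U = 0 := by
          unfold ambSec at hamb
          rcases div_eq_zero_iff.mp hamb with h | h
          · exact h
          · exact absurd h hD'
        have hN : Rq F y U V V U = 0 := by
          rw [← gmet_riemVec_eq_Rq hF hy U V]
          exact hnum
        rw [Rq_antisym34 F y U V U V, hN, neg_zero]
      · by_cases hV0 : V = 0
        · rw [hV0]
          have hz : (0 : Fin n → ℝ) = fun m => 0 * U m + 0 * U m := by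
            funext m; simp
          rw [hz, Rq_lin2 y U U U (fun m => 0 * U m + 0 * U m) U 0 0]
          ring
        · rw [linearIndependent_fin2] at hind
          push_neg at hind
          have hVne : (![U, V] 1 : Fin n → ℝ) ≠ 0 := by simpa using hV0
          obtain ⟨a, haV⟩ := hind hVne
          have haV' : a • V = U := by simpa using haV
          rw [← haV']
          have he : (a • V) = fun m => a * V m + 0 * V m := by
            funext m; simp [Pi.smul_apply]
          rw [he, Rq_lin1 y V V (fun m => a * V m + 0 * V m) V V a 0]
          rw [Rq_diag_self_zero hF hy V _ _]
          ring
    have hpoint := riem_zero_of_tangent hF hr hFy H0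
    have hw_eq : w = t⁻¹ • y := by
      rw [hy_def, smul_smul, inv_mul_cancel₀ (ne_of_gt ht), one_smul]
    rw [hw_eq, riem_homog hF (inv_pos.mpr ht) hy i j k l, hpoint i j k l]
    ring
end

section
/- Let M be a proper totally umbilical hypersurface of (ℝⁿ∖{0}, ĝ) with constant mean curvature H ≠ 0 and unit normal ν, and set f̃(y) := ĝ(y,ν) + 1/H. Then the induced Hessian satisfies ∇_X ∇f̃ + H² f̃ X = 0 for all tangent vector fields X on M. -/
open Set

-- ===== auxiliary lemmas =====
section Aux
variable {n : ℕ}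

lemma aux_diffAt {f : (Fin n → ℝ) → ℝ} (h : ContDiffOn ℝ (⊤ : ℕ∞) f {z : Fin n → ℝ | z ≠ 0})
    {z : Fin n → ℝ} (hz : z ≠ 0) : DifferentiableAt ℝ f z :=
  (h.contDiffAt (isOpen_ne.mem_nhds hz)).differentiableAt (by simp)

lemma aux_pd_cd {f : (Fin n → ℝ) → ℝ} (hf : ContDiffOn ℝ (⊤ : ℕ∞) f {z : Fin n → ℝ | z ≠ 0})
    (k : Fin n) : ContDiffOn ℝ (⊤ : ℕ∞) (pd k f) {z : Fin n → ℝ | z ≠ 0} :=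
  (hf.fderiv_of_isOpen isOpen_ne (by simp)).clm_apply contDiffOn_const

lemma aux_pd_sum (g : (Fin n → ℝ) → ℝ) (y : Fin n → ℝ) :
    ∑ k, pd k g y * y k = fderiv ℝ g y y := by
  have h1 : ∀ k : Fin n, Pi.single k (y k) = (y k) • (Pi.single k 1 : Fin n → ℝ) := by
    intro k; ext j; rcases eq_or_ne j k with h | h <;> simp [Pi.single_apply, h]
  have h2 : ∀ k : Fin n, pd k g y * y k = fderiv ℝ g y (Pi.single k (y k)) := fun k => by
    rw [h1 k, map_smul]; simp [pd, mul_comm]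
  rw [Finset.sum_congr rfl (fun k _ => h2 k), ← map_sum]
  congr 1
  exact Finset.univ_sum_single y

lemma aux_fderiv_scale {f : (Fin n → ℝ) → ℝ}
    (hf : ∀ z : Fin n → ℝ, z ≠ 0 → DifferentiableAt ℝ f z)
    {lam c : ℝ} (hl : 0 < lam)
    (hhom : ∀ z : Fin n → ℝ, z ≠ 0 → f (lam • z) = c * f z)
    {z : Fin n → ℝ} (hz : z ≠ 0) (v : Fin n → ℝ) :
    fderiv ℝ f (lam • z) v = (c / lam) * fderiv ℝ f z v := by
  have hz' : lam • z ≠ 0 := smul_ne_zero (ne_of_gt hl) hz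
  set L : (Fin n → ℝ) →L[ℝ] (Fin n → ℝ) := lam • ContinuousLinearMap.id ℝ (Fin n → ℝ) with hL
  have h1 : HasFDerivAt (fun w => f (lam • w)) (((fderiv ℝ f (lam • z)).comp L)) z := by
    have := ((hf _ hz').hasFDerivAt).comp z L.hasFDerivAt
    simpa [hL, Function.comp_def] using this
  have h2 : HasFDerivAt (fun w => c * f w) (c • fderiv ℝ f z) z :=
    ((hf _ hz).hasFDerivAt).const_mul c
  have heq : (fun w => f (lam • w)) =ᶠ[nhds z] (fun w => c * f w) := by
    filter_upwards [isOpen_ne.mem_nhds hz] with w hw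
    exact hhom w hw
  have h1' : HasFDerivAt (fun w => c * f w) (((fderiv ℝ f (lam • z)).comp L)) z :=
    h1.congr_of_eventuallyEq heq.symm
  have hEq := h1'.unique h2
  have h3 := congrArg (fun (T : (Fin n → ℝ) →L[ℝ] ℝ) => T v) hEq
  simp only [ContinuousLinearMap.comp_apply, hL, ContinuousLinearMap.smul_apply,
    ContinuousLinearMap.coe_id', id_eq, ContinuousLinearMap.coe_smul'] at h3
  have h4 : fderiv ℝ f (lam • z) (lam • v) = c * fderiv ℝ f z v := by simpa using h3
  rw [map_smul, smul_eq_mul] at h4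
  rw [div_mul_eq_mul_div, eq_div_iff (ne_of_gt hl)]
  linarith [h4]

lemma aux_euler_deg0 {f : (Fin n → ℝ) → ℝ} {y : Fin n → ℝ}
    (hd : DifferentiableAt ℝ f y)
    (hhom : ∀ t : ℝ, 0 < t → f (t • y) = f y) :
    fderiv ℝ f y y = 0 := by
  have hc : HasDerivAt (fun t : ℝ => t • y) ((1:ℝ) • y) 1 := (hasDerivAt_id 1).smul_const y
  rw [one_smul] at hc
  have h1 : HasDerivAt (fun t : ℝ => f (t • y)) (fderiv ℝ f y y) 1 := by
    have hd' := hd.hasFDerivAt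
    rw [show y = (1:ℝ) • y by rw [one_smul]] at hd'
    have := hd'.comp_hasDerivAt 1 hc
    simpa [Function.comp_def] using this
  have heq : (fun t : ℝ => f (t • y)) =ᶠ[nhds (1:ℝ)] (fun _ => f y) := by
    filter_upwards [eventually_gt_nhds zero_lt_one] with t ht
    exact hhom t ht
  have h2 : HasDerivAt (fun _ : ℝ => f y) (fderiv ℝ f y y) 1 := h1.congr_of_eventuallyEq heq.symm
  exact h2.unique (hasDerivAt_const 1 (f y))

lemma aux_fderiv_half {h : (Fin n → ℝ) → ℝ} {y : Fin n → ℝ} (hd : DifferentiableAt ℝ h y)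
    (v : Fin n → ℝ) : fderiv ℝ (fun z => h z / 2) y v = fderiv ℝ h y v / 2 := by
  have e : (fun z => h z / 2) = fun z => (1/2 : ℝ) * h z := by funext x; ring
  rw [e, fderiv_const_mul hd]; simp; ring

lemma aux_pd_comm {φ : (Fin n → ℝ) → ℝ} (hφ : ContDiffOn ℝ (⊤ : ℕ∞) φ {z : Fin n → ℝ | z ≠ 0})
    {y : Fin n → ℝ} (hy : y ≠ 0) (j s : Fin n) :
    pd j (pd s φ) y = pd s (pd j φ) y := by
  have hd : DifferentiableAt ℝ (fderiv ℝ φ) y :=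
    ((hφ.fderiv_of_isOpen isOpen_ne (WithTop.coe_le_coe.mpr le_top : (1 : WithTop ℕ∞) + 1 ≤ ((⊤ : ℕ∞) : WithTop ℕ∞))).contDiffAt
      (isOpen_ne.mem_nhds hy)).differentiableAt one_ne_zero
  have hsym : IsSymmSndFDerivAt ℝ φ y :=
    (hφ.contDiffAt (isOpen_ne.mem_nhds hy)).isSymmSndFDerivAt
      (by rw [minSmoothness_of_isRCLikeNormedField]; exact WithTop.coe_le_coe.mpr le_top)
  show fderiv ℝ (fun z => fderiv ℝ φ z (Pi.single s 1)) y (Pi.single j 1)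
      = fderiv ℝ (fun z => fderiv ℝ φ z (Pi.single j 1)) y (Pi.single s 1)
  rw [fderiv_clm_apply hd (differentiableAt_const _),
      fderiv_clm_apply hd (differentiableAt_const _)]
  simp only [fderiv_const, fderiv_fun_const, Pi.zero_apply, ContinuousLinearMap.comp_zero, add_zero,
    ContinuousLinearMap.add_apply, ContinuousLinearMap.flip_apply,
    ContinuousLinearMap.zero_apply, zero_add]
  exact hsym _ _

end Aux

section Euler
variable {n : ℕ} {F : (Fin n → ℝ) → ℝ}

structure MinkLike (n : ℕ) (F : (Fin n → ℝ) → ℝ) : Prop where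
  smooth : ContDiffOn ℝ (⊤ : ℕ∞) F {y | y ≠ 0}
  homog : ∀ lam : ℝ, 0 < lam → ∀ y, F (lam • y) = lam * F y

lemma aux_F2_cd (hF : MinkLike n F) :
    ContDiffOn ℝ (⊤ : ℕ∞) (fun z => F z ^ 2) {z : Fin n → ℝ | z ≠ 0} := hF.smooth.pow 2

lemma aux_euler_psi (hF : MinkLike n F) {y : Fin n → ℝ} (hy : y ≠ 0) (s k : Fin n) :
    fderiv ℝ (pd s (pd k (fun z => F z ^ 2))) y y = 0 := by
  have hcd0 := aux_F2_cd hF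
  have hcd1 := fun k => aux_pd_cd hcd0 k
  have hcd2 := fun s k => aux_pd_cd (hcd1 k) s
  have hhom0 : ∀ t : ℝ, 0 < t → ∀ z : Fin n → ℝ, z ≠ 0 →
      (fun z => F z ^ 2) (t • z) = t ^ 2 * (fun z => F z ^ 2) z := by
    intro t ht z _; simp only; rw [hF.homog t ht]; ring
  have hhom1 : ∀ t : ℝ, 0 < t → ∀ z : Fin n → ℝ, z ≠ 0 →
      pd k (fun z => F z ^ 2) (t • z) = t * pd k (fun z => F z ^ 2) z := by
    intro t ht z hz
    have := aux_fderiv_scale (fun w hw => aux_diffAt hcd0 hw) ht (hhom0 t ht) hz (Pi.single k 1)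
    rw [show (t^2 / t : ℝ) = t by field_simp] at this
    exact this
  have hhom2 : ∀ t : ℝ, 0 < t → ∀ z : Fin n → ℝ, z ≠ 0 →
      pd s (pd k (fun z => F z ^ 2)) (t • z) = pd s (pd k (fun z => F z ^ 2)) z := by
    intro t ht z hz
    have := aux_fderiv_scale (fun w hw => aux_diffAt (hcd1 k) hw) ht
      (fun w hw => hhom1 t ht w hw) hz (Pi.single s 1)
    rw [show (t / t : ℝ) = 1 by field_simp] at this
    simpa [pd] using this
  exact aux_euler_deg0 (aux_diffAt (hcd2 s k) hy) (fun t ht => hhom2 t ht y hy)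

lemma aux_christoffel_y (hF : MinkLike n F) {y : Fin n → ℝ} (hy : y ≠ 0)
    (i : Fin n) (X : Fin n → ℝ) :
    ∑ j, ∑ k, christoffel (gF F) y i j k * X j * y k = 0 := by
  have hcd0 := aux_F2_cd hF
  have hcd1 := fun k => aux_pd_cd hcd0 k
  have hcd2 := fun s k => aux_pd_cd (hcd1 k) s
  -- Euler identity for the metric coefficients
  have hEulerG : ∀ s j : Fin n, fderiv ℝ (fun z => gF F z s j) y y = 0 := by
    intro s j
    have e : (fun z => gF F z s j) = fun z => (pd s (pd j (fun w => F w ^ 2)) z) / 2 := rfl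
    rw [e, aux_fderiv_half (aux_diffAt (hcd2 s j) hy) y, aux_euler_psi hF hy s j]
    norm_num
  -- symmetry of the metric derivative terms
  have hSymG : ∀ j s k : Fin n,
      pd j (fun z => gF F z s k) y = pd s (fun z => gF F z j k) y := by
    intro j s k
    have e1 : (fun z => gF F z s k) = fun z => (pd s (pd k (fun w => F w ^ 2)) z) / 2 := rfl
    have e2 : (fun z => gF F z j k) = fun z => (pd j (pd k (fun w => F w ^ 2)) z) / 2 := rfl
    have h1 : pd j (fun z => gF F z s k) y = pd j (pd s (pd k (fun w => F w ^ 2))) y / 2 := by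
      rw [e1]; exact aux_fderiv_half (aux_diffAt (hcd2 s k) hy) _
    have h2 : pd s (fun z => gF F z j k) y = pd s (pd j (pd k (fun w => F w ^ 2))) y / 2 := by
      rw [e2]; exact aux_fderiv_half (aux_diffAt (hcd2 j k) hy) _
    rw [h1, h2, aux_pd_comm (hcd1 k) hy j s]
  have key : ∀ s j : Fin n,
      ∑ k, (pd k (fun z => gF F z s j) y + pd j (fun z => gF F z s k) y
        - pd s (fun z => gF F z j k) y) * y k = 0 := by
    intro s j
    have hterm : ∀ k : Fin n, (pd k (fun z => gF F z s j) y + pd j (fun z => gF F z s k) y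
        - pd s (fun z => gF F z j k) y) * y k = pd k (fun z => gF F z s j) y * y k := by
      intro k; rw [hSymG j s k]; ring
    rw [Finset.sum_congr rfl fun k _ => hterm k, aux_pd_sum, hEulerG s j]
  have hz : ∀ j : Fin n, ∑ k, christoffel (gF F) y i j k * y k = 0 := by
    intro j
    simp only [christoffel]
    have step : ∀ k : Fin n, ((1/2 : ℝ) * ∑ s, ginv (gF F) y i s *
        (pd k (fun z => gF F z s j) y + pd j (fun z => gF F z s k) y
          - pd s (fun z => gF F z j k) y)) * y k
        = ∑ s, (1/2 : ℝ) * (ginv (gF F) y i s *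
          ((pd k (fun z => gF F z s j) y + pd j (fun z => gF F z s k) y
            - pd s (fun z => gF F z j k) y) * y k)) := by
      intro k
      rw [mul_assoc, Finset.sum_mul, Finset.mul_sum]
      exact Finset.sum_congr rfl fun s _ => by ring
    rw [Finset.sum_congr rfl fun k _ => step k, Finset.sum_comm]
    refine Finset.sum_eq_zero fun s _ => ?_
    rw [← Finset.mul_sum, ← Finset.mul_sum, key s j]
    ring
  refine Finset.sum_eq_zero fun j _ => ?_
  have : ∀ k : Fin n, christoffel (gF F) y i j k * X j * y k
      = X j * (christoffel (gF F) y i j k * y k) := fun k => by ring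
  rw [Finset.sum_congr rfl fun k _ => this k, ← Finset.mul_sum, hz j, mul_zero]

end Euler

lemma aux_gmet_lin {n : ℕ} (Gm : (Fin n → ℝ) → Fin n → Fin n → ℝ) (y u v w : Fin n → ℝ)
    (a b : ℝ) :
    gmet Gm y (fun i => a * u i + b * v i) w = a * gmet Gm y u w + b * gmet Gm y v w := by
  simp only [gmet]
  rw [Finset.mul_sum, Finset.mul_sum, ← Finset.sum_add_distrib]
  refine Finset.sum_congr rfl fun i _ => ?_
  rw [Finset.mul_sum, Finset.mul_sum, ← Finset.sum_add_distrib]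
  exact Finset.sum_congr rfl fun j _ => by ring

/-- For a proper totally umbilical hypersurface `M` of `(ℝⁿ∖{0}, ĝ)` with
constant mean curvature `H ≠ 0` and unit normal `ν`, the function
`f̃(y) = ĝ(y,ν) + 1/H` satisfies the Obata equation `∇_X ∇f̃ + H² f̃ X = 0` for all tangent
`X`, where `∇f̃ = −H y^⊤` and `∇_X` denotes the tangential part of the ambient covariant
derivative. -/
theorem obata_equation_on_M {n : ℕ} (F : (Fin n → ℝ) → ℝ)
    (hF : IsMinkowskiNorm n F) (M : Set (Fin n → ℝ))
    (ν : (Fin n → ℝ) → Fin n → ℝ) (H : ℝ) (hH : H ≠ 0)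
    (hM0 : ∀ y ∈ M, y ≠ (0 : Fin n → ℝ))
    (hhyp : IsHypersurface n (gF F) M ν)
    (humb : TotallyUmbilical (gF F) M ν (fun _ => H)) :
    ∀ y ∈ M, ∀ X : Fin n → ℝ, gmet (gF F) y X (ν y) = 0 →
      (covVec (gF F) (fun z => (-H) • (z - gmet (gF F) z z (ν z) • ν z)) X y -
          gmet (gF F) y
            (covVec (gF F) (fun z => (-H) • (z - gmet (gF F) z z (ν z) • ν z)) X y)
            (ν y) • ν y) +
        (H ^ 2 * (gmet (gF F) y y (ν y) + 1 / H)) • X = 0 := by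
  intro y hy X hX
  have hy0 : y ≠ 0 := hM0 y hy
  obtain ⟨U, hUo, hMU, hνsm⟩ := hhyp.smooth_nu
  have hyU : y ∈ U := hMU hy
  have hν : ∀ i, DifferentiableAt ℝ (fun z => ν z i) y := fun i =>
    ((hνsm i).contDiffAt (hUo.mem_nhds hyU)).differentiableAt (by simp)
  have hML : MinkLike n F := ⟨hF.smooth, hF.homog⟩
  have hcd0 := aux_F2_cd hML
  have hcd2 := fun s k => aux_pd_cd (aux_pd_cd hcd0 k) s
  have hGd : ∀ a b : Fin n, DifferentiableAt ℝ (fun z => gF F z a b) y := by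
    intro a b
    have e : (fun z => gF F z a b) = fun z => (1/2 : ℝ) * pd a (pd b (fun w => F w ^ 2)) z := by
      funext z; show pd a (pd b (fun w => F w ^ 2)) z / 2 = _; ring
    rw [e]; exact (aux_diffAt (hcd2 a b) hy0).const_mul (1/2 : ℝ)
  have hfh : DifferentiableAt ℝ (fun z => gmet (gF F) z z (ν z)) y := by
    have e : (fun z => gmet (gF F) z z (ν z))
        = fun z => ∑ a, ∑ b, gF F z a b * z a * ν z b := rfl
    rw [e]
    exact DifferentiableAt.fun_sum fun a _ => DifferentiableAt.fun_sum fun b _ =>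
      ((hGd a b).fun_mul (hasFDerivAt_apply a y).differentiableAt).fun_mul (hν b)
  set d : ℝ := fderiv ℝ (fun z => gmet (gF F) z z (ν z)) y X with hd
  set f0 : ℝ := gmet (gF F) y y (ν y) with hf0
  have hder : ∀ i, fderiv ℝ (fun z => -H * (z i - gmet (gF F) z z (ν z) * ν z i)) y X
      = -H * (X i - (d * ν y i + f0 * fderiv ℝ (fun z => ν z i) y X)) := by
    intro i
    have h1 : DifferentiableAt ℝ (fun z : Fin n → ℝ => z i) y :=
      (hasFDerivAt_apply i y).differentiableAt
    have h2 : DifferentiableAt ℝ (fun z => gmet (gF F) z z (ν z) * ν z i) y := hfh.mul (hν i)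
    rw [fderiv_const_mul (h1.fun_sub h2), fderiv_fun_sub h1 h2, fderiv_fun_mul hfh (hν i)]
    simp only [ContinuousLinearMap.smul_apply, ContinuousLinearMap.sub_apply,
      ContinuousLinearMap.add_apply, smul_eq_mul, (hasFDerivAt_apply i y).fderiv,
      ContinuousLinearMap.proj_apply]
    rw [← hd, ← hf0]
    ring
  have hchr : ∀ i, ∑ j, ∑ k, christoffel (gF F) y i j k * X j * (-H * (y k - f0 * ν y k))
      = -H * (∑ j, ∑ k, christoffel (gF F) y i j k * X j * y k)
        + (H * f0) * (∑ j, ∑ k, christoffel (gF F) y i j k * X j * ν y k) := by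
    intro i
    rw [Finset.mul_sum, Finset.mul_sum, ← Finset.sum_add_distrib]
    refine Finset.sum_congr rfl fun j _ => ?_
    rw [Finset.mul_sum, Finset.mul_sum, ← Finset.sum_add_distrib]
    refine Finset.sum_congr rfl fun k _ => ?_
    ring
  have humbY := humb y hy X hX
  have hSnu : ∀ i, ∑ j, ∑ k, christoffel (gF F) y i j k * X j * ν y k
      = -H * X i - fderiv ℝ (fun z => ν z i) y X := by
    intro i
    have h := congrFun humbY i
    simp only [covVec, Pi.smul_apply, smul_eq_mul, Pi.neg_apply, neg_smul] at h
    linarith [h]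
  have hP : covVec (gF F) (fun z => (-H) • (z - gmet (gF F) z z (ν z) • ν z)) X y
      = fun i => (-(H + H ^ 2 * f0)) * X i + (H * d) * ν y i := by
    funext i
    simp only [covVec, Pi.smul_apply, Pi.sub_apply, smul_eq_mul]
    rw [← hf0, hder i, hchr i, aux_christoffel_y hML hy0 i X, hSnu i]
    ring
  have hgP : gmet (gF F) y
      (covVec (gF F) (fun z => (-H) • (z - gmet (gF F) z z (ν z) • ν z)) X y) (ν y)
      = H * d := by
    rw [hP, aux_gmet_lin (gF F) y X (ν y) (ν y) (-(H + H ^ 2 * f0)) (H * d),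
      hX, hhyp.unit y hy]
    ring
  rw [hgP, hP]
  funext i
  simp only [Pi.add_apply, Pi.sub_apply, Pi.smul_apply, smul_eq_mul, Pi.zero_apply]
  have hE : H ^ 2 * (f0 + 1 / H) = H ^ 2 * f0 + H := by field_simp
  rw [hE]
  ring
end
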